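/- arXiv:2506.16480 — 7 statements merged into one kernel-verified Lean document; each statement's English description precedes it below -/
import Mathlib

section
/- Let n ≥ 1, let W be a density matrix on ℂ^n, and let A, B be Hermitian n×n complex matrices. Then the indeterminacy (Robertson–Schrödinger) inequality holds: σ_A² · σ_B² ≥ c_{A,B}² + (1/4)·‖tr(W(AB − BA))‖², where ‖·‖ denotes the complex absolute value. -/
open Matrix
open scoped ComplexOrder

/-- Expectation value of the observable `A` in the state `W`. -/
noncomputable def expVal {n : ℕ} (W A : Matrix (Fin n) (Fin n) ℂ) : ℝ :=
  ((W * A).trace).re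

/-- Variance of the observable `A` in the state `W`. -/
noncomputable def matVar {n : ℕ} (W A : Matrix (Fin n) (Fin n) ℂ) : ℝ :=
  ((W * (A - (expVal W A : ℂ) • 1) ^ 2).trace).re

/-- Covariance of the observables `A`, `B` in the state `W`. -/
noncomputable def matCov {n : ℕ} (W A B : Matrix (Fin n) (Fin n) ℂ) : ℝ :=
  (1 / 2) * ((W * (A * B + B * A)).trace).re - expVal W A * expVal W B

/-- Frobenius-type Cauchy–Schwarz for matrices. -/
lemma trace_cauchy_schwarz {n : ℕ} (X Y : Matrix (Fin n) (Fin n) ℂ) :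
    ‖((Xᴴ * Y).trace)‖ ^ 2 ≤ ((Xᴴ * X).trace).re * ((Yᴴ * Y).trace).re := by
  let f : Matrix (Fin n) (Fin n) ℂ → EuclideanSpace ℂ (Fin n × Fin n) :=
    fun M => WithLp.toLp 2 (fun p : Fin n × Fin n => M p.1 p.2)
  have key : ∀ M N : Matrix (Fin n) (Fin n) ℂ,
      (Mᴴ * N).trace = inner ℂ (f M) (f N) := by
    intro M N
    simp only [Matrix.trace, Matrix.diag, Matrix.mul_apply, conjTranspose_apply,
      PiLp.inner_apply, RCLike.inner_apply, f, Fintype.sum_prod_type]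
    rw [Finset.sum_comm]
    simp [mul_comm]
  have h1 : ‖(inner ℂ (f X) (f Y) : ℂ)‖ ≤ ‖f X‖ * ‖f Y‖ := norm_inner_le_norm (𝕜 := ℂ) _ _
  have hx : ((Xᴴ * X).trace).re = ‖f X‖ ^ 2 := by
    rw [key]; simpa using inner_self_eq_norm_sq (𝕜 := ℂ) (f X)
  have hy : ((Yᴴ * Y).trace).re = ‖f Y‖ ^ 2 := by
    rw [key]; simpa using inner_self_eq_norm_sq (𝕜 := ℂ) (f Y)
  rw [key, hx, hy]
  calc ‖(inner ℂ (f X) (f Y) : ℂ)‖ ^ 2 ≤ (‖f X‖ * ‖f Y‖) ^ 2 := by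
        apply pow_le_pow_left₀ (norm_nonneg _) h1
    _ = ‖f X‖ ^ 2 * ‖f Y‖ ^ 2 := by ring

/-- Robertson–Schrödinger indeterminacy inequality. -/
theorem indeterminacy_inequality {n : ℕ} (hn : 1 ≤ n)
    (W A B : Matrix (Fin n) (Fin n) ℂ)
    (hW : W.PosSemidef) (htr : W.trace = 1)
    (hA : A.IsHermitian) (hB : B.IsHermitian) :
    matVar W A * matVar W B ≥
      matCov W A B ^ 2 + (1 / 4) * ‖(W * (A * B - B * A)).trace‖ ^ 2 := by
  set a : ℝ := expVal W A with ha
  set b : ℝ := expVal W B with hb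
  set A' : Matrix (Fin n) (Fin n) ℂ := A - (a : ℂ) • 1 with hA'
  set B' : Matrix (Fin n) (Fin n) ℂ := B - (b : ℂ) • 1 with hB'
  have hA'H : A'ᴴ = A' := by
    simp [hA', conjTranspose_smul, hA.eq, Complex.star_def, Complex.conj_ofReal]
  have hB'H : B'ᴴ = B' := by
    simp [hB', conjTranspose_smul, hB.eq, Complex.star_def, Complex.conj_ofReal]
  set S : Matrix (Fin n) (Fin n) ℂ := (open scoped MatrixOrder in CFC.sqrt W) with hS
  have hSS : S * S = W := by open scoped MatrixOrder in exact CFC.sqrt_mul_sqrt_self W hW.nonneg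
  have hSH : Sᴴ = S := by open scoped MatrixOrder in exact (CFC.sqrt_nonneg W).posSemidef.1
  -- contraction of conjugated traces
  have contract : ∀ P Q : Matrix (Fin n) (Fin n) ℂ, Pᴴ = P → Qᴴ = Q →
      ((P * S)ᴴ * (Q * S)).trace = (W * (P * Q)).trace := by
    intro P Q hP hQ
    rw [conjTranspose_mul, hSH, hP]
    calc (S * P * (Q * S)).trace = (S * (P * Q) * S).trace := by
          rw [mul_assoc, mul_assoc, mul_assoc]
      _ = (S * (S * (P * Q))).trace := by rw [trace_mul_cycle, mul_assoc]
      _ = (W * (P * Q)).trace := by rw [← mul_assoc, hSS]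
  -- Cauchy-Schwarz applied
  have hCS := trace_cauchy_schwarz (A' * S) (B' * S)
  rw [contract A' B' hA'H hB'H, contract A' A' hA'H hA'H, contract B' B' hB'H hB'H] at hCS
  have hVA : ((W * (A' * A')).trace).re = matVar W A := by
    rw [matVar, sq]
  have hVB : ((W * (B' * B')).trace).re = matVar W B := by
    rw [matVar, sq]
  rw [hVA, hVB] at hCS
  set z : ℂ := (W * (A' * B')).trace with hz
  set w : ℂ := (W * (A * B)).trace with hw
  -- trace (W*A) is real and equals a
  have hreal : ∀ M : Matrix (Fin n) (Fin n) ℂ, Mᴴ = M → (W * M).trace = (((W * M).trace).re : ℂ) := by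
    intro M hM
    have : star ((W * M).trace) = (W * M).trace := by
      rw [← Matrix.trace_conjTranspose, conjTranspose_mul, hM, hW.1, trace_mul_comm]
    exact (Complex.conj_eq_iff_re.mp this).symm
  have hWA : (W * A).trace = (a : ℂ) := hreal A hA.eq
  have hWB : (W * B).trace = (b : ℂ) := hreal B hB.eq
  -- z = w - a*b
  have hzw : z = w - (a : ℂ) * (b : ℂ) := by
    have expand : A' * B' = A * B - (b : ℂ) • A - (a : ℂ) • B + ((a : ℂ) * (b : ℂ)) • 1 := by
      rw [hA', hB']
      simp only [Matrix.sub_mul, Matrix.mul_sub, smul_mul_assoc, Matrix.mul_smul, one_mul,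
        Matrix.mul_one, smul_smul]
      abel_nf
      module
    rw [hz, expand]
    simp only [Matrix.mul_add, Matrix.mul_sub, Matrix.mul_smul, trace_add, trace_sub, trace_smul,
      hWA, hWB, htr, smul_eq_mul, Matrix.mul_one]
    push_cast
    ring
  -- conj w = trace (W * (B*A))
  have hconjw : (W * (B * A)).trace = star w := by
    rw [hw, ← Matrix.trace_conjTranspose, conjTranspose_mul, conjTranspose_mul, hA.eq, hB.eq,
      hW.1, trace_mul_comm, mul_assoc]
  -- covariance equals re z
  have hcov : matCov W A B = z.re := by
    have : ((W * (A * B + B * A)).trace) = w + star w := by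
      rw [Matrix.mul_add, trace_add, hconjw, hw]
    rw [matCov, this, hzw]
    simp [Complex.add_re, Complex.sub_re, ← ha, ← hb]
    ring
  -- commutator trace
  have hcomm : (W * (A * B - B * A)).trace = w - star w := by
    rw [Matrix.mul_sub, trace_sub, hconjw, hw]
  have habs : ‖(W * (A * B - B * A)).trace‖ ^ 2 = (2 * w.im) ^ 2 := by
    rw [hcomm, Complex.sq_norm, Complex.normSq_apply]
    simp [Complex.sub_re, Complex.sub_im]
    ring
  have himz : z.im = w.im := by
    rw [hzw]; simp
  have hsq : ‖z‖ ^ 2 = z.re ^ 2 + z.im ^ 2 := by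
    rw [Complex.sq_norm, Complex.normSq_apply]; ring
  calc matCov W A B ^ 2 + (1 / 4) * ‖(W * (A * B - B * A)).trace‖ ^ 2
      = z.re ^ 2 + z.im ^ 2 := by rw [hcov, habs, himz]; ring
    _ = ‖z‖ ^ 2 := hsq.symm
    _ ≤ matVar W A * matVar W B := hCS
end

section
/- Let n ≥ 1, let W be a density matrix on ℂ^n, let A, B be Hermitian n×n complex matrices with σ_A > 0 and σ_B > 0, and let κ_{A,B} := c_{A,B}/(σ_A·σ_B) be the correlation coefficient, where σ_A := √(σ_A²) and σ_B := √(σ_B²). Then for each sign s ∈ {+1, −1}: κ_{A,B} = s if and only if there exist λ > 0 and μ ∈ ℝ such that (A − s·λ·B)·W = μ·W, i.e. W is an eigenstate of A − s·λ·B. -/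
open Matrix
open scoped ComplexOrder

private lemma mat_eq_zero_of_re_trace {n : ℕ} (X : Matrix (Fin n) (Fin n) ℂ)
    (h : ((Xᴴ * X).trace).re = 0) : X = 0 := by
  have hs : ((Xᴴ * X).trace).re = ∑ i, ∑ j, Complex.normSq (X j i) := by
    simp only [Matrix.trace, Matrix.diag, Matrix.mul_apply, Matrix.conjTranspose_apply]
    rw [Complex.re_sum]
    refine Finset.sum_congr rfl fun i _ => ?_
    rw [Complex.re_sum]
    refine Finset.sum_congr rfl fun j _ => ?_
    simp [Complex.normSq_apply, Complex.mul_re]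
  rw [hs] at h
  have key : ∀ i j, Complex.normSq (X j i) = 0 := by
    intro i j
    have h1 : ∀ i ∈ Finset.univ, (0:ℝ) ≤ ∑ j, Complex.normSq (X j i) :=
      fun i _ => Finset.sum_nonneg fun j _ => Complex.normSq_nonneg _
    have h2 := (Finset.sum_eq_zero_iff_of_nonneg h1).mp h i (Finset.mem_univ i)
    exact (Finset.sum_eq_zero_iff_of_nonneg
      (fun j _ => Complex.normSq_nonneg _)).mp h2 j (Finset.mem_univ j)
  ext j i
  exact Complex.normSq_eq_zero.mp (key i j)

/-- Perfect (anti)correlation: the correlation coefficient equals `s = ±1` iff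
`W` is an eigenstate of `A − s·λ·B` for some `λ > 0`. -/
theorem correlation_extreme_iff_eigenstate {n : ℕ} (hn : 1 ≤ n)
    (W A B : Matrix (Fin n) (Fin n) ℂ)
    (hW : W.PosSemidef) (htr : W.trace = 1)
    (hA : A.IsHermitian) (hB : B.IsHermitian)
    (hσA : 0 < Real.sqrt (matVar W A)) (hσB : 0 < Real.sqrt (matVar W B))
    (s : ℝ) (hs : s = 1 ∨ s = -1) :
    matCov W A B / (Real.sqrt (matVar W A) * Real.sqrt (matVar W B)) = s ↔
      ∃ lam : ℝ, 0 < lam ∧ ∃ μ : ℝ,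
        (A - ((s * lam : ℝ) : ℂ) • B) * W = (μ : ℂ) • W := by
  set a := expVal W A with ha
  set b := expVal W B with hb
  obtain ⟨M, hM, hMh⟩ : ∃ M : Matrix (Fin n) (Fin n) ℂ, M * M = W ∧ Mᴴ = M := by
    open scoped MatrixOrder in
    exact ⟨CFC.sqrt W, CFC.sqrt_mul_sqrt_self W hW.nonneg,
      (CFC.sqrt_nonneg W).posSemidef.isHermitian⟩
  set A' : Matrix (Fin n) (Fin n) ℂ := A - (a:ℂ) • 1 with hA'def
  set B' : Matrix (Fin n) (Fin n) ℂ := B - (b:ℂ) • 1 with hB'def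
  have hA'h : A'ᴴ = A' := by
    simp [hA'def, Matrix.conjTranspose_sub, Matrix.conjTranspose_smul, hA.eq,
      Complex.star_def, Complex.conj_ofReal]
  have hB'h : B'ᴴ = B' := by
    simp [hB'def, Matrix.conjTranspose_sub, Matrix.conjTranspose_smul, hB.eq,
      Complex.star_def, Complex.conj_ofReal]
  set X : Matrix (Fin n) (Fin n) ℂ := A' * M with hXdef
  set Y : Matrix (Fin n) (Fin n) ℂ := B' * M with hYdef
  have key : ∀ P Q : Matrix (Fin n) (Fin n) ℂ, Pᴴ = P →
      ((P * M)ᴴ * (Q * M)).trace = (W * (P * Q)).trace := by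
    intro P Q hP
    rw [Matrix.conjTranspose_mul, hMh, hP]
    rw [show M * P * (Q * M) = (M * (P * Q)) * M by noncomm_ring]
    rw [Matrix.trace_mul_comm, ← Matrix.mul_assoc, hM]
  set vA := matVar W A with hvAdef
  set vB := matVar W B with hvBdef
  have hvA : vA = ((Xᴴ * X).trace).re := by
    rw [hvAdef, matVar, hXdef, key A' A' hA'h, sq]
  have hvB : vB = ((Yᴴ * Y).trace).re := by
    rw [hvBdef, matVar, hYdef, key B' B' hB'h, sq]
  set σA := Real.sqrt vA with hσAdef
  set σB := Real.sqrt vB with hσBdef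
  have hvApos : 0 < vA := Real.sqrt_pos.mp hσA
  have hvBpos : 0 < vB := Real.sqrt_pos.mp hσB
  have hσA2 : σA ^ 2 = vA := Real.sq_sqrt hvApos.le
  have hσB2 : σB ^ 2 = vB := Real.sq_sqrt hvBpos.le
  have hs2 : s ^ 2 = 1 := by rcases hs with h | h <;> rw [h] <;> norm_num
  -- real part symmetry: for Hermitian P, Q, Re tr(W Q P) = Re tr(W P Q)
  have hermsym : ∀ P Q : Matrix (Fin n) (Fin n) ℂ, Pᴴ = P → Qᴴ = Q →
      ((W * (Q * P)).trace).re = ((W * (P * Q)).trace).re := by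
    intro P Q hP hQ
    have h1 : (W * (P * Q))ᴴ = (Q * P) * W := by
      simp [Matrix.conjTranspose_mul, hP, hQ, hW.isHermitian.eq, Matrix.mul_assoc]
    have h2 : star ((W * (P * Q)).trace) = (W * (Q * P)).trace := by
      rw [← Matrix.trace_conjTranspose, h1, Matrix.trace_mul_comm]
    rw [← h2, Complex.star_def, Complex.conj_re]
  -- covariance identity
  have hcov : matCov W A B = ((Xᴴ * Y).trace).re := by
    rw [hXdef, hYdef, key A' B' hA'h]
    have hexp : A' * B' = A * B - (b:ℂ) • A - (a:ℂ) • B + ((a*b : ℝ):ℂ) • 1 := by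
      rw [hA'def, hB'def]
      push_cast
      simp only [Matrix.sub_mul, Matrix.mul_sub, Matrix.smul_mul, Matrix.mul_smul,
        Matrix.one_mul, Matrix.mul_one, smul_smul]
      module
    rw [hexp]
    simp only [Matrix.mul_add, Matrix.mul_sub, Matrix.mul_smul, Matrix.trace_add,
      Matrix.trace_sub, Matrix.trace_smul, htr, smul_eq_mul, mul_one]
    rw [matCov]
    have hBA : ((W * (B * A)).trace).re = ((W * (A * B)).trace).re :=
      hermsym A B hA.eq hB.eq
    simp only [Matrix.mul_add, Matrix.trace_add, Complex.add_re, Complex.sub_re,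
      Complex.re_ofReal_mul, Complex.ofReal_re]
    rw [hBA]
    rw [show ((W*A).trace).re = a from rfl, show ((W*B).trace).re = b from rfl]
    ring
  -- symmetry of Re tr(Xᴴ Y)
  have hsymXY : ((Yᴴ * X).trace).re = ((Xᴴ * Y).trace).re := by
    rw [hXdef, hYdef, key B' A' hB'h, key A' B' hA'h]
    exact hermsym A' B' hA'h hB'h
  constructor
  · -- forward
    intro hκ
    have hcovval : matCov W A B = s * (σA * σB) := by
      field_simp at hκ
      linarith [hκ]
    set Z : Matrix (Fin n) (Fin n) ℂ := (σB:ℂ) • X - ((s*σA : ℝ):ℂ) • Y with hZdef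
    have hZtr : ((Zᴴ * Z).trace).re = 0 := by
      have hZh : Zᴴ = (σB:ℂ) • Xᴴ - ((s*σA : ℝ):ℂ) • Yᴴ := by
        simp [hZdef, Matrix.conjTranspose_sub, Matrix.conjTranspose_smul,
          Complex.star_def, Complex.conj_ofReal]
      rw [hZdef, hZh]
      simp only [Matrix.sub_mul, Matrix.mul_sub, Matrix.smul_mul, Matrix.mul_smul,
        smul_smul, Matrix.trace_sub, Matrix.trace_smul, smul_eq_mul]
      simp only [Complex.sub_re, Complex.re_ofReal_mul]
      rw [← hvA, ← hvB, hsymXY, ← hcov, hcovval, ← hσA2, ← hσB2]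
      rcases hs with h | h <;> rw [h] <;> ring
    have hZ0 : Z = 0 := mat_eq_zero_of_re_trace Z hZtr
    have hXY : X = ((s*(σA/σB) : ℝ):ℂ) • Y := by
      have h1 : (σB:ℂ) • X = ((s*σA : ℝ):ℂ) • Y := by
        rwa [hZdef, sub_eq_zero] at hZ0
      have hσBne : (σB:ℂ) ≠ 0 := by
        exact_mod_cast (ne_of_gt hσB)
      calc X = (σB:ℂ)⁻¹ • ((σB:ℂ) • X) := by rw [smul_smul, inv_mul_cancel₀ hσBne, one_smul]
        _ = (σB:ℂ)⁻¹ • (((s*σA : ℝ):ℂ) • Y) := by rw [h1]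
        _ = ((s*(σA/σB) : ℝ):ℂ) • Y := by
            rw [smul_smul]
            congr 1
            push_cast
            field_simp
    refine ⟨σA/σB, div_pos hσA hσB, a - s*(σA/σB)*b, ?_⟩
    have hAM : A * M = X + (a:ℂ) • M := by
      rw [hXdef, hA'def, Matrix.sub_mul, Matrix.smul_mul, Matrix.one_mul]
      abel
    have hBM : B * M = Y + (b:ℂ) • M := by
      rw [hYdef, hB'def, Matrix.sub_mul, Matrix.smul_mul, Matrix.one_mul]
      abel
    have hstep : (A - ((s * (σA/σB) : ℝ) : ℂ) • B) * M = ((a - s*(σA/σB)*b : ℝ):ℂ) • M := by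
      rw [Matrix.sub_mul, Matrix.smul_mul, hAM, hBM, hXY]
      rw [smul_add, smul_smul]
      push_cast
      module
    calc (A - ((s * (σA/σB) : ℝ) : ℂ) • B) * W
        = ((A - ((s * (σA/σB) : ℝ) : ℂ) • B) * M) * M := by rw [Matrix.mul_assoc, hM]
      _ = ((a - s*(σA/σB)*b : ℝ):ℂ) • (M * M) := by rw [hstep, Matrix.smul_mul]
      _ = ((a - s*(σA/σB)*b : ℝ):ℂ) • W := by rw [hM]
  · -- backward
    rintro ⟨lam, hlam, μ, heq⟩
    set c : ℂ := ((s*lam : ℝ):ℂ) with hcdef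
    set C : Matrix (Fin n) (Fin n) ℂ := A - c • B - (μ:ℂ) • 1 with hCdef
    have hCW : C * W = 0 := by
      rw [hCdef, Matrix.sub_mul, heq, Matrix.smul_mul, Matrix.one_mul, sub_self]
    have hCh : Cᴴ = C := by
      simp [hCdef, Matrix.conjTranspose_sub, Matrix.conjTranspose_smul, hA.eq, hB.eq,
        Complex.star_def, Complex.conj_ofReal, hcdef]
    have hCM : C * M = 0 := by
      have h1 : (C * M) * (C * M)ᴴ = 0 := by
        rw [Matrix.conjTranspose_mul, hMh, hCh]
        rw [show C * M * (M * C) = C * (M * M) * C by noncomm_ring, hM, hCW,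
          Matrix.zero_mul]
      have h2 : (((C*M)ᴴ * (C*M)).trace).re = 0 := by
        rw [Matrix.trace_mul_comm, h1, Matrix.trace_zero, Complex.zero_re]
      exact mat_eq_zero_of_re_trace _ h2
    have hμ : a - s*lam*b - μ = 0 := by
      have h1 : (W*A).trace - c * ((W*B).trace) - (μ:ℂ) = 0 := by
        have h0 := congrArg Matrix.trace hCW
        simp only [hCdef, Matrix.sub_mul, Matrix.smul_mul, Matrix.one_mul,
          Matrix.trace_sub, Matrix.trace_smul, Matrix.trace_zero, smul_eq_mul, htr,
          mul_one] at h0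
        rw [Matrix.trace_mul_comm A W, Matrix.trace_mul_comm B W] at h0
        exact h0
      have h3 := congrArg Complex.re h1
      simp only [Complex.sub_re, hcdef, Complex.re_ofReal_mul, Complex.ofReal_re,
        Complex.zero_re] at h3
      rw [show ((W*A).trace).re = a from rfl, show ((W*B).trace).re = b from rfl] at h3
      linarith [h3]
    have hAM : A * M = X + (a:ℂ) • M := by
      rw [hXdef, hA'def, Matrix.sub_mul, Matrix.smul_mul, Matrix.one_mul]
      abel
    have hBM : B * M = Y + (b:ℂ) • M := by
      rw [hYdef, hB'def, Matrix.sub_mul, Matrix.smul_mul, Matrix.one_mul]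
      abel
    have hXY : X = c • Y := by
      have h1 : A * M - c • (B * M) - (μ:ℂ) • M = 0 := by
        rw [← hCM, hCdef]
        simp [Matrix.sub_mul, Matrix.smul_mul, Matrix.one_mul]
      rw [hAM, hBM] at h1
      have hcoef : (a:ℂ) - c * b - (μ:ℂ) = 0 := by
        have h4 := congrArg (fun r : ℝ => (r:ℂ)) hμ
        push_cast at h4
        rw [hcdef]
        push_cast
        linear_combination h4
      have : X - c • Y + ((a:ℂ) - c * b - (μ:ℂ)) • M = 0 := by
        rw [← h1]; module
      rw [hcoef, zero_smul, add_zero, sub_eq_zero] at this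
      exact this
    -- now compute
    have hXh : Xᴴ = c • Yᴴ := by
      rw [hXY, Matrix.conjTranspose_smul, hcdef, Complex.star_def, Complex.conj_ofReal]
    have hvAval : vA = lam^2 * vB := by
      rw [hvA, hXh, hXY]
      simp only [Matrix.smul_mul, Matrix.mul_smul, smul_smul, Matrix.trace_smul, smul_eq_mul]
      rw [hcdef, show ((s*lam : ℝ):ℂ) * ((s*lam : ℝ):ℂ) = ((s*lam*(s*lam) : ℝ):ℂ) by push_cast; ring]
      rw [Complex.re_ofReal_mul, ← hvB]
      rcases hs with h | h <;> rw [h] <;> ring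
    have hcovval : matCov W A B = s * lam * vB := by
      rw [hcov, hXh]
      simp only [Matrix.smul_mul, Matrix.trace_smul, smul_eq_mul]
      rw [hcdef, Complex.re_ofReal_mul, ← hvB]
    have hσAval : σA = lam * σB := by
      rw [hσAdef, hvAval, Real.sqrt_mul (sq_nonneg lam), Real.sqrt_sq hlam.le, hσBdef]
    rw [hcovval, hσAval]
    have hσBne : σB ≠ 0 := ne_of_gt hσB
    have hlamne : lam ≠ 0 := ne_of_gt hlam
    have hσBsq : σB * σB = vB := Real.mul_self_sqrt hvBpos.le
    field_simp
    have h5 : lam * σB * σB = lam * vB := by rw [← hσBsq]; ring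
    rw [← hσB2]
end

section
/- Let β > 0 and D > 0, and let υ : ℝ → ℝ be continuous, bounded below, of at most polynomial growth, and such that ∫ e^{−β·υ(q)} dq < ∞. For τ ≥ 0 define the Gauss transform υ_τ(q) := ∫ (2π)^{−1/2}·e^{−ξ²/2}·υ(q + ξ·√(τ·D)) dξ and the classical partition function z(τ) := ∫ e^{−β·υ_τ(q)} dq. Then z is antitone in τ: for all 0 ≤ τ ≤ τ' one has z(τ') ≤ z(τ). -/
open MeasureTheory

noncomputable def gPDF (ξ : ℝ) : ℝ := (Real.sqrt (2 * Real.pi))⁻¹ * Real.exp (-ξ ^ 2 / 2)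

noncomputable def pPDF (σ u : ℝ) : ℝ :=
  (Real.sqrt (2 * Real.pi) * σ)⁻¹ * Real.exp (-u ^ 2 / (2 * σ ^ 2))

lemma sqrt2pi_pos : 0 < Real.sqrt (2 * Real.pi) := Real.sqrt_pos.2 (by positivity)

lemma gPDF_nonneg (ξ : ℝ) : 0 ≤ gPDF ξ := by
  unfold gPDF; positivity

lemma gPDF_cont : Continuous gPDF := by
  unfold gPDF; fun_prop

lemma pPDF_cont (σ : ℝ) : Continuous (pPDF σ) := by
  unfold pPDF; fun_prop

lemma pPDF_nonneg {σ : ℝ} (hσ : 0 < σ) (u : ℝ) : 0 ≤ pPDF σ u := by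
  unfold pPDF; positivity

lemma integrable_gPDF : Integrable gPDF := by
  have h := (integrable_exp_neg_mul_sq (by norm_num : (0:ℝ) < 1/2)).const_mul
    (Real.sqrt (2 * Real.pi))⁻¹
  have heq : gPDF = fun x : ℝ => (Real.sqrt (2 * Real.pi))⁻¹ * Real.exp (-(1/2 : ℝ) * x ^ 2) := by
    funext x
    unfold gPDF
    congr 1
    ring
  rw [heq]
  exact h

lemma integral_gPDF : ∫ ξ : ℝ, gPDF ξ = 1 := by
  unfold gPDF
  rw [MeasureTheory.integral_const_mul]
  have h1 : ∫ ξ : ℝ, Real.exp (-ξ ^ 2 / 2) = Real.sqrt (2 * Real.pi) := by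
    have : ∀ x : ℝ, -x ^ 2 / 2 = -(1/2 : ℝ) * x ^ 2 := fun x => by ring
    simp_rw [this]
    rw [integral_gaussian, show Real.pi / (1/2 : ℝ) = 2 * Real.pi by ring]
  rw [h1, inv_mul_cancel₀ sqrt2pi_pos.ne']

lemma integrable_abs_pow_gauss (j : ℕ) :
    Integrable (fun x : ℝ => |x| ^ j * Real.exp (-x ^ 2 / 2)) := by
  have h := integrable_rpow_mul_exp_neg_mul_sq (b := (1:ℝ)/2) (by norm_num)
    (s := (j : ℝ)) (lt_of_lt_of_le neg_one_lt_zero (Nat.cast_nonneg j))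
  refine h.abs.congr (Filter.Eventually.of_forall fun x => ?_)
  simp only [abs_mul, Real.rpow_natCast, abs_pow, Real.abs_exp,
    show ∀ y : ℝ, -(1/2 : ℝ) * y ^ 2 = -y ^ 2 / 2 from fun y => by ring]

lemma integrable_one_add_abs_pow_gauss (k : ℕ) :
    Integrable (fun ξ : ℝ => (1 + |ξ|) ^ k * Real.exp (-ξ ^ 2 / 2)) := by
  have heq : (fun ξ : ℝ => (1 + |ξ|) ^ k * Real.exp (-ξ ^ 2 / 2)) = fun ξ =>
      ∑ i ∈ Finset.range (k + 1),
        (1:ℝ) ^ i * |ξ| ^ (k - i) * (k.choose i : ℝ) * Real.exp (-ξ ^ 2 / 2) := by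
    funext ξ
    rw [add_pow, Finset.sum_mul]
  rw [heq]
  apply integrable_finset_sum
  intro i _
  have h := (integrable_abs_pow_gauss (k - i)).const_mul ((k.choose i : ℝ))
  refine h.congr (Filter.Eventually.of_forall fun ξ => ?_)
  ring

lemma integrable_gPDF_poly (k : ℕ) : Integrable (fun ξ : ℝ => gPDF ξ * (1 + |ξ|) ^ k) := by
  have h := (integrable_one_add_abs_pow_gauss k).const_mul (Real.sqrt (2 * Real.pi))⁻¹
  refine h.congr (Filter.Eventually.of_forall fun ξ => ?_)
  unfold gPDF
  ring

lemma Mk_nonneg (k : ℕ) : 0 ≤ ∫ ξ : ℝ, gPDF ξ * (1 + |ξ|) ^ k :=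
  integral_nonneg fun ξ => mul_nonneg (gPDF_nonneg ξ) (by positivity)

lemma one_add_abs_bound (q σ ξ : ℝ) :
    1 + |q + ξ * σ| ≤ (1 + |q|) * (1 + |σ|) * (1 + |ξ|) := by
  have h1 : |q + ξ * σ| ≤ |q| + |ξ| * |σ| := (abs_add_le _ _).trans (by rw [abs_mul])
  nlinarith [h1, abs_nonneg q, abs_nonneg σ, abs_nonneg ξ,
    mul_nonneg (abs_nonneg q) (abs_nonneg σ), mul_nonneg (abs_nonneg q) (abs_nonneg ξ),
    mul_nonneg (abs_nonneg ξ) (abs_nonneg σ),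
    mul_nonneg (mul_nonneg (abs_nonneg q) (abs_nonneg σ)) (abs_nonneg ξ)]

section Workhorse

variable {u : ℝ → ℝ} {C : ℝ} {k : ℕ}

lemma integrand_bound (hC : 0 ≤ C) (hb : ∀ x, |u x| ≤ C * (1 + |x|) ^ k) (σ q ξ : ℝ)
    {M : ℝ} (hM : 1 + |q| ≤ M) :
    ‖gPDF ξ * u (q + ξ * σ)‖ ≤ C * M ^ k * (1 + |σ|) ^ k * (gPDF ξ * (1 + |ξ|) ^ k) := by
  have hM0 : (0:ℝ) ≤ M := le_trans (by positivity) hM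
  have h1 : |u (q + ξ * σ)| ≤ C * (M * (1 + |σ|) * (1 + |ξ|)) ^ k := by
    refine (hb _).trans (mul_le_mul_of_nonneg_left ?_ hC)
    refine pow_le_pow_left₀ (by positivity) ((one_add_abs_bound q σ ξ).trans ?_) k
    have : (0:ℝ) ≤ (1 + |σ|) * (1 + |ξ|) := by positivity
    nlinarith [abs_nonneg σ, abs_nonneg ξ]
  rw [Real.norm_eq_abs, abs_mul, abs_of_nonneg (gPDF_nonneg ξ)]
  refine (mul_le_mul_of_nonneg_left h1 (gPDF_nonneg ξ)).trans (le_of_eq ?_)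
  rw [mul_pow, mul_pow]
  ring

lemma W_integrable (hu : Continuous u) (hC : 0 ≤ C) (hb : ∀ x, |u x| ≤ C * (1 + |x|) ^ k)
    (σ q : ℝ) : Integrable (fun ξ : ℝ => gPDF ξ * u (q + ξ * σ)) := by
  refine Integrable.mono' (((integrable_gPDF_poly k).const_mul
      (C * (1 + |q|) ^ k * (1 + |σ|) ^ k)))
    ((gPDF_cont.mul (hu.comp (by fun_prop))).aestronglyMeasurable)
    (Filter.Eventually.of_forall fun ξ => ?_)
  exact integrand_bound hC hb σ q ξ le_rfl

lemma W_bound (hu : Continuous u) (hC : 0 ≤ C) (hb : ∀ x, |u x| ≤ C * (1 + |x|) ^ k)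
    (σ q : ℝ) :
    |∫ ξ : ℝ, gPDF ξ * u (q + ξ * σ)| ≤
      C * (1 + |σ|) ^ k * (∫ ξ : ℝ, gPDF ξ * (1 + |ξ|) ^ k) * (1 + |q|) ^ k := by
  have h0 : ‖∫ ξ : ℝ, gPDF ξ * u (q + ξ * σ)‖ ≤ ∫ ξ : ℝ, ‖gPDF ξ * u (q + ξ * σ)‖ :=
    norm_integral_le_integral_norm _
  rw [Real.norm_eq_abs] at h0
  refine h0.trans ?_
  have h1 : ∫ ξ : ℝ, ‖gPDF ξ * u (q + ξ * σ)‖ ≤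
      ∫ ξ : ℝ, C * (1 + |q|) ^ k * (1 + |σ|) ^ k * (gPDF ξ * (1 + |ξ|) ^ k) := by
    refine integral_mono (W_integrable hu hC hb σ q).norm
      ((integrable_gPDF_poly k).const_mul _) fun ξ => ?_
    exact integrand_bound hC hb σ q ξ le_rfl
  refine h1.trans (le_of_eq ?_)
  rw [MeasureTheory.integral_const_mul]
  ring

lemma W_ge (hu : Continuous u) (hC : 0 ≤ C) (hb : ∀ x, |u x| ≤ C * (1 + |x|) ^ k)
    {c : ℝ} (hc : ∀ x, c ≤ u x) (σ q : ℝ) :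
    c ≤ ∫ ξ : ℝ, gPDF ξ * u (q + ξ * σ) := by
  have h1 : (c : ℝ) = ∫ ξ : ℝ, gPDF ξ * c := by
    rw [MeasureTheory.integral_mul_const, integral_gPDF, one_mul]
  rw [h1]
  exact integral_mono (integrable_gPDF.mul_const c) (W_integrable hu hC hb σ q)
    fun ξ => mul_le_mul_of_nonneg_left (hc _) (gPDF_nonneg ξ)

lemma W_cont (hu : Continuous u) (hC : 0 ≤ C) (hb : ∀ x, |u x| ≤ C * (1 + |x|) ^ k)
    (σ : ℝ) : Continuous (fun q : ℝ => ∫ ξ : ℝ, gPDF ξ * u (q + ξ * σ)) := by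
  rw [continuous_iff_continuousAt]
  intro x₀
  apply continuousAt_of_dominated
    (bound := fun ξ => C * (2 + |x₀|) ^ k * (1 + |σ|) ^ k * (gPDF ξ * (1 + |ξ|) ^ k))
  · exact Filter.Eventually.of_forall fun x =>
      ((gPDF_cont.mul (hu.comp (by fun_prop))).aestronglyMeasurable)
  · filter_upwards [Metric.ball_mem_nhds x₀ one_pos] with x hx
    refine Filter.Eventually.of_forall fun ξ => ?_
    have hxx : 1 + |x| ≤ 2 + |x₀| := by
      have := abs_sub_abs_le_abs_sub x x₀
      have h2 : |x - x₀| < 1 := by simpa [Real.dist_eq] using hx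
      linarith
    exact integrand_bound hC hb σ x ξ hxx
  · exact (integrable_gPDF_poly k).const_mul _
  · exact Filter.Eventually.of_forall fun ξ =>
      ((continuous_const.mul (hu.comp (by fun_prop))).continuousAt)

end Workhorse

lemma sub_lemma {σ : ℝ} (hσ : 0 < σ) (F : ℝ → ℝ) :
    ∫ ξ : ℝ, gPDF ξ * F (ξ * σ) = ∫ u : ℝ, pPDF σ u * F u := by
  have hσ' : σ ≠ 0 := hσ.ne'
  have h := MeasureTheory.Measure.integral_comp_mul_left (fun u => pPDF σ u * F u) σ
  have key : ∀ ξ : ℝ, pPDF σ (σ * ξ) * F (σ * ξ) = σ⁻¹ * (gPDF ξ * F (ξ * σ)) := by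
    intro ξ
    unfold pPDF gPDF
    rw [mul_comm σ ξ]
    have harg : -(ξ * σ) ^ 2 / (2 * σ ^ 2) = -ξ ^ 2 / 2 := by
      field_simp
    rw [harg, mul_inv]
    ring
  simp_rw [key] at h
  rw [MeasureTheory.integral_const_mul, abs_of_pos (inv_pos.2 hσ), smul_eq_mul] at h
  exact mul_left_cancel₀ (inv_ne_zero hσ') h

lemma conv_lemma {σ ρ : ℝ} (hσ : 0 < σ) (hρ : 0 < ρ) (x : ℝ) :
    ∫ y : ℝ, pPDF ρ y * pPDF σ (x - y) = pPDF (Real.sqrt (σ ^ 2 + ρ ^ 2)) x := by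
  have hσ' : σ ≠ 0 := hσ.ne'
  have hρ' : ρ ≠ 0 := hρ.ne'
  set t := Real.sqrt (σ ^ 2 + ρ ^ 2) with ht
  have ht0 : 0 < t := Real.sqrt_pos.2 (by positivity)
  have ht' : t ≠ 0 := ht0.ne'
  have ht2 : t ^ 2 = σ ^ 2 + ρ ^ 2 := Real.sq_sqrt (by positivity)
  set c := t ^ 2 / (2 * ρ ^ 2 * σ ^ 2) with hc
  have hc0 : 0 < c := by rw [hc]; positivity
  set m := ρ ^ 2 * x / t ^ 2 with hm
  have key : ∀ y : ℝ, pPDF ρ y * pPDF σ (x - y)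
      = ((Real.sqrt (2 * Real.pi) * ρ)⁻¹ * (Real.sqrt (2 * Real.pi) * σ)⁻¹
          * Real.exp (-x ^ 2 / (2 * t ^ 2))) * Real.exp (-c * (y - m) ^ 2) := by
    intro y
    have hexp : -y ^ 2 / (2 * ρ ^ 2) + -(x - y) ^ 2 / (2 * σ ^ 2)
        = -x ^ 2 / (2 * t ^ 2) + -c * (y - m) ^ 2 := by
      rw [hc, hm, ht2]
      field_simp
      ring
    calc pPDF ρ y * pPDF σ (x - y)
        = ((Real.sqrt (2 * Real.pi) * ρ)⁻¹ * (Real.sqrt (2 * Real.pi) * σ)⁻¹)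
            * Real.exp (-y ^ 2 / (2 * ρ ^ 2) + -(x - y) ^ 2 / (2 * σ ^ 2)) := by
          unfold pPDF
          rw [Real.exp_add]
          ring
      _ = _ := by rw [hexp, Real.exp_add]; ring
  simp_rw [key]
  rw [MeasureTheory.integral_const_mul]
  have hshift : ∫ y : ℝ, Real.exp (-c * (y - m) ^ 2) = Real.sqrt (Real.pi / c) := by
    rw [← integral_gaussian c]
    exact integral_sub_right_eq_self (fun y => Real.exp (-c * y ^ 2)) m
  rw [hshift]
  have hs : Real.sqrt (Real.pi / c) = Real.sqrt (2 * Real.pi) * (ρ * σ / t) := by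
    rw [show Real.pi / c = 2 * Real.pi * (ρ * σ / t) ^ 2 by rw [hc]; field_simp,
      Real.sqrt_mul (by positivity), Real.sqrt_sq (by positivity)]
  rw [hs]
  unfold pPDF
  have h2π : Real.sqrt (2 * Real.pi) * Real.sqrt (2 * Real.pi) = 2 * Real.pi :=
    Real.mul_self_sqrt (by positivity)
  field_simp


section Workhorse2

variable {u : ℝ → ℝ} {C : ℝ} {k : ℕ}

lemma p_integrable (hu : Continuous u) (hC : 0 ≤ C) (hb : ∀ x, |u x| ≤ C * (1 + |x|) ^ k)
    {σ : ℝ} (hσ : 0 < σ) (b : ℝ) :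
    Integrable (fun x : ℝ => pPDF σ x * u (b + x)) := by
  rw [← integrable_comp_mul_left_iff (fun x : ℝ => pPDF σ x * u (b + x)) hσ.ne']
  have h := (W_integrable hu hC hb σ b).const_mul σ⁻¹
  refine h.congr (Filter.Eventually.of_forall fun ξ => ?_)
  show σ⁻¹ * (gPDF ξ * u (b + ξ * σ)) = pPDF σ (σ * ξ) * u (b + σ * ξ)
  unfold pPDF gPDF
  have harg : -(σ * ξ) ^ 2 / (2 * σ ^ 2) = -ξ ^ 2 / 2 := by
    field_simp
  rw [harg, mul_inv, mul_comm σ ξ]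
  ring

lemma p_shift_integrable (hu : Continuous u) (hC : 0 ≤ C)
    (hb : ∀ x, |u x| ≤ C * (1 + |x|) ^ k) {σ : ℝ} (hσ : 0 < σ) (b y : ℝ) :
    Integrable (fun x : ℝ => pPDF σ (x - y) * u (b + x)) := by
  have h := (p_integrable hu hC hb hσ (b + y)).comp_sub_right y
  refine h.congr (Filter.Eventually.of_forall fun x => ?_)
  show pPDF σ (x - y) * u (b + y + (x - y)) = pPDF σ (x - y) * u (b + x)
  rw [show b + y + (x - y) = b + x by ring]

lemma semigroup (hu : Continuous u) (hC : 0 ≤ C) (hb : ∀ x, |u x| ≤ C * (1 + |x|) ^ k)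
    {σ ρ : ℝ} (hσ : 0 ≤ σ) (hρ : 0 < ρ) (q : ℝ) :
    ∫ ξ : ℝ, gPDF ξ * u (q + ξ * Real.sqrt (σ ^ 2 + ρ ^ 2)) =
      ∫ η : ℝ, gPDF η * ∫ ξ : ℝ, gPDF ξ * u (q + η * ρ + ξ * σ) := by
  rcases eq_or_lt_of_le hσ with hσ0 | hσpos
  · rw [← hσ0]
    simp only [mul_zero, add_zero]
    have h1 : Real.sqrt (0 ^ 2 + ρ ^ 2) = ρ := by
      rw [show (0:ℝ) ^ 2 + ρ ^ 2 = ρ ^ 2 by ring, Real.sqrt_sq hρ.le]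
    rw [h1]
    congr 1
    funext η
    congr 1
    rw [MeasureTheory.integral_mul_const, integral_gPDF, one_mul]
  · set t := Real.sqrt (σ ^ 2 + ρ ^ 2) with ht
    have ht0 : 0 < t := Real.sqrt_pos.2 (by positivity)
    have hb' : ∀ x, abs (abs (u x)) ≤ C * (1 + |x|) ^ k := fun x => by
      rw [abs_abs]; exact hb x
    have hWform : ∀ y : ℝ, (∫ ξ : ℝ, gPDF ξ * u (q + y + ξ * σ))
        = ∫ x : ℝ, pPDF σ (x - y) * u (q + x) := by
      intro y
      rw [sub_lemma hσpos (fun v => u (q + y + v))]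
      have h2 := integral_sub_right_eq_self (μ := volume)
        (fun x : ℝ => pPDF σ x * u (q + y + x)) y
      rw [← h2]
      congr 1
      funext x
      rw [show q + y + (x - y) = q + x by ring]
    have hint : Integrable (Function.uncurry fun x y : ℝ =>
        pPDF ρ y * (pPDF σ (x - y) * u (q + x))) ((volume : Measure ℝ).prod volume) := by
      have hcontp : Continuous (Function.uncurry fun x y : ℝ =>
          pPDF ρ y * (pPDF σ (x - y) * u (q + x))) :=
        ((pPDF_cont ρ).comp continuous_snd).mul
          (((pPDF_cont σ).comp (continuous_fst.sub continuous_snd)).mul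
            (hu.comp (continuous_const.add continuous_fst)))
      refine (integrable_prod_iff hcontp.aestronglyMeasurable).2 ⟨?_, ?_⟩
      · refine Filter.Eventually.of_forall fun x => ?_
        simp only [Function.uncurry_apply_pair]
        have h3 : Integrable (fun y : ℝ => pPDF ρ (y - 0) * ((fun _ => (1:ℝ)) (x + y))) :=
          p_shift_integrable continuous_const (zero_le_one) (C := 1) (k := 0)
            (fun z => by simp) hρ x 0
        simp only [sub_zero, mul_one] at h3
        -- h3 : Integrable (pPDF ρ)
        have hbd : ∀ y : ℝ, ‖pPDF ρ y * (pPDF σ (x - y) * u (q + x))‖ ≤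
            ((Real.sqrt (2 * Real.pi) * σ)⁻¹ * |u (q + x)|) * pPDF ρ y := by
          intro y
          rw [Real.norm_eq_abs, abs_mul, abs_mul, abs_of_nonneg (pPDF_nonneg hρ y),
            abs_of_nonneg (pPDF_nonneg hσpos _)]
          have hple : pPDF σ (x - y) ≤ (Real.sqrt (2 * Real.pi) * σ)⁻¹ := by
            unfold pPDF
            have he : Real.exp (-(x - y) ^ 2 / (2 * σ ^ 2)) ≤ 1 := by
              rw [← Real.exp_zero]
              refine Real.exp_le_exp.2 ?_
              rw [neg_div]
              exact neg_nonpos.2 (by positivity)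
            nlinarith [Real.exp_pos (-(x - y) ^ 2 / (2 * σ ^ 2)),
              inv_nonneg.2 (mul_nonneg sqrt2pi_pos.le hσpos.le), he]
          calc pPDF ρ y * (pPDF σ (x - y) * |u (q + x)|)
              ≤ pPDF ρ y * ((Real.sqrt (2 * Real.pi) * σ)⁻¹ * |u (q + x)|) :=
                mul_le_mul_of_nonneg_left
                  (mul_le_mul_of_nonneg_right hple (abs_nonneg _)) (pPDF_nonneg hρ y)
            _ = (Real.sqrt (2 * Real.pi) * σ)⁻¹ * |u (q + x)| * pPDF ρ y := by ring
        refine Integrable.mono' (h3.const_mul _) ?_ (Filter.Eventually.of_forall hbd)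
        exact ((pPDF_cont ρ).mul (((pPDF_cont σ).comp (continuous_const.sub continuous_id)).mul
          continuous_const)).aestronglyMeasurable
      · simp only [Function.uncurry_apply_pair]
        have heq : ∀ x : ℝ, (∫ y : ℝ, ‖pPDF ρ y * (pPDF σ (x - y) * u (q + x))‖)
            = pPDF t x * |u (q + x)| := by
          intro x
          have h4 : ∀ y : ℝ, ‖pPDF ρ y * (pPDF σ (x - y) * u (q + x))‖
              = pPDF ρ y * pPDF σ (x - y) * |u (q + x)| := by
            intro y
            rw [Real.norm_eq_abs, abs_mul, abs_mul, abs_of_nonneg (pPDF_nonneg hρ y),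
              abs_of_nonneg (pPDF_nonneg hσpos _)]
            ring
          simp_rw [h4]
          rw [MeasureTheory.integral_mul_const, conv_lemma hσpos hρ x, ← ht]
        simp_rw [heq]
        exact p_integrable (continuous_abs.comp hu) hC hb' ht0 q
    calc ∫ ξ : ℝ, gPDF ξ * u (q + ξ * t)
        = ∫ x : ℝ, pPDF t x * u (q + x) := sub_lemma ht0 (fun v => u (q + v))
      _ = ∫ x : ℝ, (∫ y : ℝ, pPDF ρ y * pPDF σ (x - y)) * u (q + x) := by
          congr 1
          funext x
          rw [conv_lemma hσpos hρ x, ← ht]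
      _ = ∫ x : ℝ, ∫ y : ℝ, pPDF ρ y * (pPDF σ (x - y) * u (q + x)) := by
          congr 1
          funext x
          rw [← MeasureTheory.integral_mul_const]
          congr 1
          funext y
          ring
      _ = ∫ y : ℝ, ∫ x : ℝ, pPDF ρ y * (pPDF σ (x - y) * u (q + x)) :=
          integral_integral_swap hint
      _ = ∫ y : ℝ, pPDF ρ y * ∫ x : ℝ, pPDF σ (x - y) * u (q + x) := by
          congr 1
          funext y
          rw [MeasureTheory.integral_const_mul]
      _ = ∫ η : ℝ, gPDF η * ∫ ξ : ℝ, gPDF ξ * u (q + η * ρ + ξ * σ) := by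
          rw [← sub_lemma hρ (fun v => ∫ x : ℝ, pPDF σ (x - v) * u (q + x))]
          congr 1
          funext η
          rw [← hWform (η * ρ)]

end Workhorse2

open scoped ENNReal in
lemma jensen_gauss {β : ℝ} (hβ : 0 < β) {F : ℝ → ℝ} (hFc : Continuous F) {c : ℝ}
    (hFlb : ∀ x, c ≤ F x) (hFi : Integrable (fun η : ℝ => gPDF η * F η)) :
    Real.exp (-β * ∫ η : ℝ, gPDF η * F η) ≤ ∫ η : ℝ, gPDF η * Real.exp (-β * F η) := by
  have hmeas : Measurable fun η : ℝ => Real.toNNReal (gPDF η) :=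
    measurable_real_toNNReal.comp gPDF_cont.measurable
  set ν : Measure ℝ := volume.withDensity (fun η => (Real.toNNReal (gPDF η) : ℝ≥0∞)) with hν
  haveI : IsProbabilityMeasure ν := by
    constructor
    rw [hν, withDensity_apply _ MeasurableSet.univ, setLIntegral_univ]
    have h := ofReal_integral_eq_lintegral_ofReal integrable_gPDF
      (Filter.Eventually.of_forall gPDF_nonneg)
    rw [integral_gPDF, ENNReal.ofReal_one] at h
    exact h.symm
  have hsmul : ∀ G : ℝ → ℝ, ∫ x, G x ∂ν = ∫ η : ℝ, gPDF η * G η := by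
    intro G
    rw [hν, integral_withDensity_eq_integral_smul hmeas]
    congr 1
    funext η
    simp [NNReal.smul_def, Real.coe_toNNReal _ (gPDF_nonneg η)]
  have hF : Integrable F ν := by
    rw [hν, integrable_withDensity_iff_integrable_smul hmeas]
    refine hFi.congr (Filter.Eventually.of_forall fun η => ?_)
    simp [NNReal.smul_def, Real.coe_toNNReal _ (gPDF_nonneg η)]
  have hexpF : Integrable (fun x => Real.exp (-β * F x)) ν := by
    refine Integrable.mono' (integrable_const (Real.exp (-β * c)))
      ((Real.continuous_exp.comp (continuous_const.mul hFc)).aestronglyMeasurable)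
      (Filter.Eventually.of_forall fun η => ?_)
    rw [Real.norm_eq_abs, Real.abs_exp]
    exact Real.exp_le_exp.2 (by nlinarith [hFlb η])
  have hconv : ConvexOn ℝ Set.univ fun x : ℝ => Real.exp (-β * x) := by
    have h2 := convexOn_exp.comp_affineMap (LinearMap.mulLeft ℝ (-β)).toAffineMap
    have h3 : (fun x : ℝ => Real.exp (-β * x)) = Real.exp ∘ ⇑(LinearMap.mulLeft ℝ (-β)) := by
      funext x
      simp
    rw [h3]
    simpa using h2
  have hj := hconv.map_integral_le (μ := ν)
    ((Real.continuous_exp.comp (continuous_const.mul continuous_id)).continuousOn)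
    isClosed_univ (Filter.Eventually.of_forall fun x => Set.mem_univ _) hF hexpF
  rw [hsmul F, hsmul (fun x => Real.exp (-β * F x))] at hj
  exact hj

/-- The classical partition function with Gauss-transformed potential is antitone
in the smoothing parameter `τ`. -/
theorem partition_function_antitone
    (β D : ℝ) (hβ : 0 < β) (hD : 0 < D)
    (υ : ℝ → ℝ) (hcont : Continuous υ)
    (hbdd : ∃ c : ℝ, ∀ q : ℝ, c ≤ υ q)
    (hpoly : ∃ (C : ℝ) (k : ℕ), ∀ q : ℝ, |υ q| ≤ C * (1 + |q|) ^ k)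
    (hintegrable : Integrable (fun q : ℝ => Real.exp (-β * υ q)))
    (υτ : ℝ → ℝ → ℝ)
    (hυτ : ∀ τ q, υτ τ q =
      ∫ ξ : ℝ, (Real.sqrt (2 * Real.pi))⁻¹ * Real.exp (-ξ ^ 2 / 2) *
        υ (q + ξ * Real.sqrt (τ * D)))
    (z : ℝ → ℝ)
    (hz : ∀ τ, z τ = ∫ q : ℝ, Real.exp (-β * υτ τ q)) :
    ∀ τ τ' : ℝ, 0 ≤ τ → τ ≤ τ' → z τ' ≤ z τ := by
  intro τ τ' hτ hττ'
  obtain ⟨C, k, hpoly⟩ := hpoly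
  obtain ⟨c, hc⟩ := hbdd
  have hC : 0 ≤ C := le_trans (abs_nonneg (υ 0)) (by simpa using hpoly 0)
  set W : ℝ → ℝ → ℝ := fun σ q => ∫ ξ : ℝ, gPDF ξ * υ (q + ξ * σ) with hW
  have hυτW : ∀ s q, υτ s q = W (Real.sqrt (s * D)) q := by
    intro s q
    rw [hυτ, hW]
    simp only [gPDF]
  have hWcont : ∀ σ, Continuous (W σ) := fun σ => W_cont hcont hC hpoly σ
  have hBnn : ∀ σ : ℝ, 0 ≤ C * (1 + |σ|) ^ k * ∫ ξ : ℝ, gPDF ξ * (1 + |ξ|) ^ k := fun σ =>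
    mul_nonneg (mul_nonneg hC (by positivity)) (Mk_nonneg k)
  have hWpoly : ∀ σ q, |W σ q| ≤
      (C * (1 + |σ|) ^ k * ∫ ξ : ℝ, gPDF ξ * (1 + |ξ|) ^ k) * (1 + |q|) ^ k := fun σ q =>
    W_bound hcont hC hpoly σ q
  have hWge : ∀ σ q, c ≤ W σ q := fun σ q => W_ge hcont hC hpoly hc σ q
  have hgauss1 : ∫⁻ η : ℝ, ENNReal.ofReal (gPDF η) = 1 := by
    have h := ofReal_integral_eq_lintegral_ofReal integrable_gPDF
      (Filter.Eventually.of_forall gPDF_nonneg)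
    rw [integral_gPDF, ENNReal.ofReal_one] at h
    exact h.symm
  have key : ∀ a b : ℝ, 0 ≤ a → a ≤ b →
      (∫⁻ q : ℝ, ENNReal.ofReal (Real.exp (-β * W (Real.sqrt (b * D)) q))) ≤
      (∫⁻ q : ℝ, ENNReal.ofReal (Real.exp (-β * W (Real.sqrt (a * D)) q))) := by
    intro a b ha hab
    rcases eq_or_lt_of_le hab with rfl | hlt
    · exact le_rfl
    set σ := Real.sqrt (a * D) with hσdef
    set ρ := Real.sqrt ((b - a) * D) with hρdef
    have hρ : 0 < ρ := Real.sqrt_pos.2 (mul_pos (sub_pos.2 hlt) hD)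
    have hσnn : 0 ≤ σ := Real.sqrt_nonneg _
    have hsum : Real.sqrt (σ ^ 2 + ρ ^ 2) = Real.sqrt (b * D) := by
      rw [hσdef, hρdef, Real.sq_sqrt (mul_nonneg ha hD.le),
        Real.sq_sqrt (mul_nonneg (sub_nonneg.2 hab) hD.le)]
      congr 1
      ring
    have hsg : ∀ q, W (Real.sqrt (b * D)) q = ∫ η : ℝ, gPDF η * W σ (q + η * ρ) := by
      intro q
      rw [← hsum, hW]
      exact semigroup hcont hC hpoly hσnn hρ q
    have hFi : ∀ q, Integrable (fun η : ℝ => gPDF η * W σ (q + η * ρ)) := fun q =>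
      W_integrable (hWcont σ) (hBnn σ) (hWpoly σ) ρ q
    have jens : ∀ q, Real.exp (-β * W (Real.sqrt (b * D)) q)
        ≤ ∫ η : ℝ, gPDF η * Real.exp (-β * W σ (q + η * ρ)) := by
      intro q
      rw [hsg q]
      exact jensen_gauss hβ (F := fun η => W σ (q + η * ρ))
        ((hWcont σ).comp (continuous_const.add (continuous_id.mul continuous_const)))
        (fun η => hWge σ _) (hFi q)
    have hexpint : ∀ q : ℝ, Integrable (fun η : ℝ =>
        gPDF η * Real.exp (-β * W σ (q + η * ρ))) := by
      intro q
      refine Integrable.mono' (integrable_gPDF.mul_const (Real.exp (-β * c)))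
        ((gPDF_cont.mul (Real.continuous_exp.comp (continuous_const.mul ((hWcont σ).comp
          (continuous_const.add (continuous_id.mul continuous_const)))))).aestronglyMeasurable)
        (Filter.Eventually.of_forall fun η => ?_)
      rw [Real.norm_eq_abs, abs_mul, abs_of_nonneg (gPDF_nonneg η), Real.abs_exp]
      refine mul_le_mul_of_nonneg_left ?_ (gPDF_nonneg η)
      exact Real.exp_le_exp.2 (by nlinarith [hWge σ (q + η * ρ)])
    have hmeasq : ∀ η : ℝ, Measurable fun q : ℝ =>
        ENNReal.ofReal (Real.exp (-β * W σ (q + η * ρ))) := fun η =>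
      ENNReal.measurable_ofReal.comp ((Real.continuous_exp.comp (continuous_const.mul
        ((hWcont σ).comp (continuous_id.add continuous_const)))).measurable)
    calc (∫⁻ q : ℝ, ENNReal.ofReal (Real.exp (-β * W (Real.sqrt (b * D)) q)))
        ≤ ∫⁻ q : ℝ, ENNReal.ofReal (∫ η : ℝ, gPDF η * Real.exp (-β * W σ (q + η * ρ))) :=
          lintegral_mono fun q => ENNReal.ofReal_le_ofReal (jens q)
      _ = ∫⁻ q : ℝ, ∫⁻ η : ℝ, ENNReal.ofReal (gPDF η * Real.exp (-β * W σ (q + η * ρ))) := by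
          congr 1
          funext q
          exact ofReal_integral_eq_lintegral_ofReal (hexpint q)
            (Filter.Eventually.of_forall fun η =>
              mul_nonneg (gPDF_nonneg η) (Real.exp_pos _).le)
      _ = ∫⁻ η : ℝ, ∫⁻ q : ℝ, ENNReal.ofReal (gPDF η * Real.exp (-β * W σ (q + η * ρ))) := by
          apply lintegral_lintegral_swap
          refine (ENNReal.measurable_ofReal.comp ?_).aemeasurable
          exact ((gPDF_cont.comp continuous_snd).mul (Real.continuous_exp.comp
            (continuous_const.mul ((hWcont σ).comp
              (continuous_fst.add (continuous_snd.mul continuous_const)))))).measurable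
      _ = ∫⁻ η : ℝ, ENNReal.ofReal (gPDF η) *
            ∫⁻ q : ℝ, ENNReal.ofReal (Real.exp (-β * W σ (q + η * ρ))) := by
          congr 1
          funext η
          rw [← lintegral_const_mul _ (hmeasq η)]
          congr 1
          funext q
          rw [ENNReal.ofReal_mul (gPDF_nonneg η)]
      _ = ∫⁻ η : ℝ, ENNReal.ofReal (gPDF η) *
            ∫⁻ q : ℝ, ENNReal.ofReal (Real.exp (-β * W σ q)) := by
          congr 1
          funext η
          congr 1
          exact lintegral_add_right_eq_self (μ := volume)
            (fun q => ENNReal.ofReal (Real.exp (-β * W σ q))) (η * ρ)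
      _ = (∫⁻ η : ℝ, ENNReal.ofReal (gPDF η)) *
            ∫⁻ q : ℝ, ENNReal.ofReal (Real.exp (-β * W σ q)) :=
          lintegral_mul_const _ (ENNReal.measurable_ofReal.comp gPDF_cont.measurable)
      _ = ∫⁻ q : ℝ, ENNReal.ofReal (Real.exp (-β * W σ q)) := by rw [hgauss1, one_mul]
  have hW0 : ∀ q, W 0 q = υ q := by
    intro q
    rw [hW]
    simp only [mul_zero, add_zero]
    rw [MeasureTheory.integral_mul_const, integral_gPDF, one_mul]
  have hfin : (∫⁻ q : ℝ, ENNReal.ofReal (Real.exp (-β * W (Real.sqrt (0 * D)) q))) < ⊤ := by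
    rw [show Real.sqrt (0 * D) = 0 by rw [zero_mul, Real.sqrt_zero]]
    simp_rw [hW0]
    calc (∫⁻ q : ℝ, ENNReal.ofReal (Real.exp (-β * υ q)))
        = ∫⁻ q : ℝ, (‖Real.exp (-β * υ q)‖₊ : ENNReal) := by
          congr 1
          funext q
          rw [← Real.enorm_eq_ofReal (Real.exp_pos _).le, enorm_eq_nnnorm]
      _ < ⊤ := hintegrable.hasFiniteIntegral
  have hzto : ∀ s : ℝ, z s =
      (∫⁻ q : ℝ, ENNReal.ofReal (Real.exp (-β * W (Real.sqrt (s * D)) q))).toReal := by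
    intro s
    rw [hz]
    simp_rw [hυτW s]
    rw [integral_eq_lintegral_of_nonneg_ae (f := fun q => Real.exp (-β * W (Real.sqrt (s * D)) q))
      (Filter.Eventually.of_forall fun q => (Real.exp_pos _).le)
      ((Real.continuous_exp.comp (continuous_const.mul (hWcont _))).aestronglyMeasurable)]
  rw [hzto τ, hzto τ']
  exact ENNReal.toReal_mono ((lt_of_le_of_lt (key 0 τ le_rfl hτ) hfin)).ne
    (key τ τ' hτ hττ')
end

section
/- (Hidden-variable model for spin 1/2.) Let a ∈ ℝ³ with a ≠ 0, let a₀ ∈ ℝ, and let p ∈ ℝ³ with ‖p‖ ≤ 1. Then (1/(4π)) · ∫_{S²} ( a₀ + ‖a‖·sgn((p + ω)·a) ) dσ(ω) = a₀ + p·a, where the integral is over the unit sphere S² ⊂ ℝ³ with respect to its surface measure σ (total mass 4π), and sgn(ξ) := 1 for ξ ≥ 0 and sgn(ξ) := −1 for ξ < 0. (The right-hand side equals the quantum expectation value tr(W·A) of the observable A = a₀·I + a·S in the state W = (1/2)(I + p·S) on ℂ².) -/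
open MeasureTheory Metric

/-- The sign function with `sgn 0 = 1`. -/
noncomputable def sgn' (ξ : ℝ) : ℝ := if 0 ≤ ξ then 1 else -1

/-- The Euclidean dot product on `EuclideanSpace ℝ (Fin 3)`. -/
noncomputable def dotE (u v : EuclideanSpace ℝ (Fin 3)) : ℝ :=
  u 0 * v 0 + u 1 * v 1 + u 2 * v 2

open Set

local notation "E2" => EuclideanSpace ℝ (Fin 2)
local notation "E3" => EuclideanSpace ℝ (Fin 3)

lemma sgn'_measurable : Measurable sgn' :=
  Measurable.ite (measurableSet_le measurable_const measurable_id) measurable_const measurable_const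

lemma abs_sgn' (ξ : ℝ) : |sgn' ξ| ≤ 1 := by
  unfold sgn'; split <;> simp

lemma sgn'_mul_pos {r : ℝ} (hr : 0 < r) (ξ : ℝ) : sgn' (r * ξ) = sgn' ξ := by
  unfold sgn'
  rcases le_or_gt 0 ξ with h | h
  · rw [if_pos h, if_pos (by positivity)]
  · rw [if_neg (by nlinarith), if_neg (by linarith)]

lemma vol_ball3 : volume (ball (0 : EuclideanSpace ℝ (Fin 3)) 1)
    = ENNReal.ofReal (4 * Real.pi / 3) := by
  rw [EuclideanSpace.volume_ball]
  have h32 : Real.Gamma (3/2) = Real.sqrt Real.pi / 2 := by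
    have := Real.Gamma_add_one (s := (1/2 : ℝ)) (by norm_num)
    rw [Real.Gamma_one_half_eq] at this
    norm_num at this ⊢
    linarith
  have h52 : Real.Gamma ((Fintype.card (Fin 3) : ℝ)/2 + 1) = 3 * Real.sqrt Real.pi / 4 := by
    have := Real.Gamma_add_one (s := (3/2 : ℝ)) (by norm_num)
    rw [h32] at this
    simp only [Fintype.card_fin]
    push_cast
    rw [show (3:ℝ)/2 + 1 = 3/2 + 1 by norm_num, this]; ring
  rw [h52]
  have hs : Real.sqrt Real.pi ^ 2 = Real.pi := Real.sq_sqrt Real.pi_pos.le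
  have hs0 : (0:ℝ) < Real.sqrt Real.pi := Real.sqrt_pos.2 Real.pi_pos
  have h : Real.sqrt Real.pi ^ Fintype.card (Fin 3) / (3 * Real.sqrt Real.pi / 4)
      = 4 * Real.pi / 3 := by
    simp only [Fintype.card_fin]
    field_simp
    nlinarith [hs]
  rw [h]
  simp

lemma vol_mball2 (A : ℝ) :
    volume {z : EuclideanSpace ℝ (Fin 2) | ‖z‖^2 < A} = ENNReal.ofReal (Real.pi * A) := by
  rcases le_or_gt A 0 with hA | hA
  · have : {z : EuclideanSpace ℝ (Fin 2) | ‖z‖^2 < A} = ∅ := by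
      ext z; simp only [mem_setOf_eq, mem_empty_iff_false, iff_false, not_lt]
      nlinarith [norm_nonneg z]
    rw [this, measure_empty, Eq.comm, ENNReal.ofReal_eq_zero]
    nlinarith [Real.pi_pos]
  · have hset : {z : EuclideanSpace ℝ (Fin 2) | ‖z‖^2 < A} = ball 0 (Real.sqrt A) := by
      ext z
      rw [mem_ball_zero_iff, mem_setOf_eq, ← Real.lt_sqrt (norm_nonneg z)]
    rw [hset, EuclideanSpace.volume_ball]
    rw [show Real.Gamma ((Fintype.card (Fin 2):ℝ)/2 + 1) = 1 by
      simp only [Fintype.card_fin]; norm_num [Real.Gamma_two]]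
    rw [← ENNReal.ofReal_pow (Real.sqrt_nonneg A), ← ENNReal.ofReal_mul (by positivity)]
    congr 1
    simp only [Fintype.card_fin]
    rw [Real.sq_sqrt hA.le, Real.sq_sqrt Real.pi_pos.le]
    ring

lemma vol_cmball2 (A : ℝ) (hA : 0 ≤ A) :
    volume {z : EuclideanSpace ℝ (Fin 2) | ‖z‖^2 ≤ A} = ENNReal.ofReal (Real.pi * A) := by
  have hset : {z : EuclideanSpace ℝ (Fin 2) | ‖z‖^2 ≤ A} = closedBall 0 (Real.sqrt A) := by
    ext z
    rw [mem_closedBall_zero_iff, mem_setOf_eq, ← Real.le_sqrt (norm_nonneg z) hA]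
  rw [hset, EuclideanSpace.volume_closedBall]
  rw [show Real.Gamma ((Fintype.card (Fin 2):ℝ)/2 + 1) = 1 by
    simp only [Fintype.card_fin]; norm_num [Real.Gamma_two]]
  rw [← ENNReal.ofReal_pow (Real.sqrt_nonneg A), ← ENNReal.ofReal_mul (by positivity)]
  congr 1
  simp only [Fintype.card_fin]
  rw [Real.sq_sqrt hA, Real.sq_sqrt Real.pi_pos.le]
  ring


noncomputable def ψ : ℝ × EuclideanSpace ℝ (Fin 2) → EuclideanSpace ℝ (Fin 3) :=
  fun p => ((MeasurableEquiv.toLp 2 (Fin 3 → ℝ)).symm).symm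
    ((MeasurableEquiv.piFinSuccAbove (fun _ : Fin 3 => ℝ) 0).symm
      (p.1, fun j => p.2 j))

lemma ψ_measurePreserving : MeasurePreserving ψ volume volume := by
  have h1 := (EuclideanSpace.volume_preserving_symm_measurableEquiv_toLp (Fin 3)).symm
  have h2 := (MeasureTheory.volume_preserving_piFinSuccAbove (fun _ : Fin 3 => ℝ) 0).symm
  have h3 := (MeasurePreserving.id (volume : Measure ℝ)).prod
    (EuclideanSpace.volume_preserving_symm_measurableEquiv_toLp (Fin 2))
  have := h1.comp (h2.comp h3)
  exact this

lemma ψ_apply_zero (p : ℝ × EuclideanSpace ℝ (Fin 2)) : ψ p 0 = p.1 := by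
  simp [ψ, MeasurableEquiv.piFinSuccAbove_symm_apply]

lemma ψ_norm (p : ℝ × EuclideanSpace ℝ (Fin 2)) :
    ‖ψ p‖ = Real.sqrt (p.1^2 + ‖p.2‖^2) := by
  rw [EuclideanSpace.norm_eq, EuclideanSpace.norm_eq]
  congr 1
  rw [Fin.sum_univ_three, Fin.sum_univ_two]
  have h0 : ψ p 0 = p.1 := ψ_apply_zero p
  have h1 : ψ p 1 = p.2 0 := by
    simp [ψ, MeasurableEquiv.piFinSuccAbove_symm_apply]
  have h2 : ψ p 2 = p.2 1 := by
    simp [ψ, MeasurableEquiv.piFinSuccAbove_symm_apply]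
    rfl
  rw [h0, h1, h2]
  rw [Real.sq_sqrt (by positivity)]
  simp [sq_abs]
  ring


noncomputable def slc (t s : ℝ) : Set E2 :=
  {z : E2 | Real.sqrt (s^2 + ‖z‖^2) < 1 ∧ t * Real.sqrt (s^2 + ‖z‖^2) + s < 0}

lemma sqrt_lt_one_iff {x : ℝ} (hx : 0 ≤ x) : Real.sqrt x < 1 ↔ x < 1 := by
  rw [show (1:ℝ) = Real.sqrt 1 by simp, Real.sqrt_lt_sqrt_iff hx, Real.sqrt_one]

lemma sliceA_nonneg {t s : ℝ} (ht : 0 ≤ t) (hs : 0 ≤ s) : slc t s = ∅ := by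
  ext z
  simp only [slc, mem_setOf_eq, mem_empty_iff_false, iff_false, not_and, not_lt]
  intro _
  positivity

lemma sliceA_mid {t s : ℝ} (ht : 0 < t) (hst : -t < s) (hs : s < 0) :
    volume (slc t s) = ENNReal.ofReal (Real.pi * (s^2 * (1 - t^2) / t^2)) := by
  have hs2t2 : s^2 < t^2 := by nlinarith
  have hset : slc t s = {z : E2 | ‖z‖^2 < s^2 * (1 - t^2) / t^2} := by
    ext z
    have hnz : (0:ℝ) ≤ s^2 + ‖z‖^2 := by positivity
    have hsq : Real.sqrt (s^2 + ‖z‖^2) ^ 2 = s^2 + ‖z‖^2 := Real.sq_sqrt hnz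
    simp only [slc, mem_setOf_eq]
    constructor
    · rintro ⟨h1, h2⟩
      have h2' : t * Real.sqrt (s^2 + ‖z‖^2) < -s := by linarith
      have hsn := Real.sqrt_nonneg (s^2 + ‖z‖^2)
      have key := mul_self_lt_mul_self (mul_nonneg ht.le hsn) h2'
      have hsq2 : t^2 * (s^2 + ‖z‖^2) < s^2 := by nlinarith [key, hsq]
      rw [lt_div_iff₀ (by positivity)]
      nlinarith
    · intro h
      rw [lt_div_iff₀ (by positivity)] at h
      have h2 : t^2 * (s^2 + ‖z‖^2) < s^2 := by nlinarith
      have hlt1 : s^2 + ‖z‖^2 < 1 := by nlinarith [sq_nonneg ‖z‖]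
      refine ⟨(sqrt_lt_one_iff hnz).2 hlt1, ?_⟩
      have := Real.sqrt_nonneg (s^2 + ‖z‖^2)
      have hsq : Real.sqrt (s^2 + ‖z‖^2) ^ 2 = s^2 + ‖z‖^2 := Real.sq_sqrt hnz
      nlinarith
  rw [hset, vol_mball2]

lemma sliceA_low {t s : ℝ} (ht : 0 ≤ t) (hs : s < 0) (hst : s ≤ -t) :
    volume (slc t s) = ENNReal.ofReal (Real.pi * (1 - s^2)) := by
  have ht2s2 : t^2 ≤ s^2 := by nlinarith
  have hset : slc t s = {z : E2 | ‖z‖^2 < 1 - s^2} := by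
    ext z
    have hnz : (0:ℝ) ≤ s^2 + ‖z‖^2 := by positivity
    have hsq : Real.sqrt (s^2 + ‖z‖^2) ^ 2 = s^2 + ‖z‖^2 := Real.sq_sqrt hnz
    have hsn := Real.sqrt_nonneg (s^2 + ‖z‖^2)
    simp only [slc, mem_setOf_eq]
    constructor
    · rintro ⟨h1, _⟩
      have : s^2 + ‖z‖^2 < 1 := by nlinarith
      linarith
    · intro h
      have hlt1 : s^2 + ‖z‖^2 < 1 := by linarith
      refine ⟨(sqrt_lt_one_iff hnz).2 hlt1, ?_⟩
      rcases eq_or_lt_of_le ht with ht0 | ht0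
      · rw [← ht0]; simpa using hs
      · have h2 : t^2 * (s^2 + ‖z‖^2) < s^2 := by
          nlinarith [mul_lt_mul_of_pos_left hlt1 (pow_pos ht0 2)]
        nlinarith
  rw [hset, vol_mball2]

lemma sliceB_neg {t s : ℝ} (ht : t ≤ 0) (hs : s < 0) :
    volume (slc t s) = ENNReal.ofReal (Real.pi * (1 - s^2)) := by
  have hset : slc t s = {z : E2 | ‖z‖^2 < 1 - s^2} := by
    ext z
    have hnz : (0:ℝ) ≤ s^2 + ‖z‖^2 := by positivity
    have hsn := Real.sqrt_nonneg (s^2 + ‖z‖^2)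
    simp only [slc, mem_setOf_eq]
    constructor
    · rintro ⟨h1, _⟩
      have : s^2 + ‖z‖^2 < 1 := (sqrt_lt_one_iff hnz).1 h1
      linarith
    · intro h
      refine ⟨(sqrt_lt_one_iff hnz).2 (by linarith), ?_⟩
      nlinarith
  rw [hset, vol_mball2]

lemma sliceB_pos {t s : ℝ} (ht1 : -1 ≤ t) (ht : t < 0) (hs : 0 < s) :
    volume (slc t s) = ENNReal.ofReal (Real.pi * (1 - s^2/t^2)) := by
  have ht2 : 0 < t^2 := by nlinarith
  rcases lt_or_ge s (-t) with hst | hst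
  · -- annulus case : s^2 < t^2
    have hs2t2 : s^2 < t^2 := by nlinarith
    have hBA : s^2 * (1-t^2) / t^2 < 1 - s^2 := by
      rw [div_lt_iff₀ ht2]; nlinarith
    have ht2le : t^2 ≤ 1 := by nlinarith
    have hB0 : 0 ≤ s^2 * (1-t^2) / t^2 :=
      div_nonneg (mul_nonneg (sq_nonneg s) (by linarith)) ht2.le
    have hset : slc t s =
        {z : E2 | ‖z‖^2 < 1 - s^2} \ {z : E2 | ‖z‖^2 ≤ s^2 * (1-t^2) / t^2} := by
      ext z
      have hnz : (0:ℝ) ≤ s^2 + ‖z‖^2 := by positivity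
      have hsq : Real.sqrt (s^2 + ‖z‖^2) ^ 2 = s^2 + ‖z‖^2 := Real.sq_sqrt hnz
      have hsn := Real.sqrt_nonneg (s^2 + ‖z‖^2)
      simp only [slc, mem_diff, mem_setOf_eq, not_le]
      constructor
      · rintro ⟨h1, h2⟩
        have hw1 : s^2 + ‖z‖^2 < 1 := (sqrt_lt_one_iff hnz).1 h1
        constructor
        · linarith
        · -- from h2 : t * sqrt + s < 0, t<0 : sqrt > s/(-t)
          have h3 : s < (-t) * Real.sqrt (s^2 + ‖z‖^2) := by nlinarith
          have h4 : s^2 < t^2 * (s^2 + ‖z‖^2) := by nlinarith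
          rw [div_lt_iff₀ ht2]; nlinarith
      · rintro ⟨h1, h2⟩
        rw [div_lt_iff₀ ht2] at h2
        have h4 : s^2 < t^2 * (s^2 + ‖z‖^2) := by nlinarith
        refine ⟨(sqrt_lt_one_iff hnz).2 (by linarith), ?_⟩
        -- need t * sqrt + s < 0 i.e. (-t) * sqrt > s
        have h5 : s^2 < ((-t) * Real.sqrt (s^2 + ‖z‖^2))^2 := by
          rw [mul_pow]; nlinarith
        have h6 : s < (-t) * Real.sqrt (s^2 + ‖z‖^2) := by
          nlinarith [mul_nonneg (neg_nonneg.2 ht.le) hsn]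
        linarith
    rw [hset, measure_diff _ _ (by rw [vol_cmball2 _ hB0]; exact ENNReal.ofReal_ne_top)]
    · rw [vol_mball2, vol_cmball2 _ hB0, ← ENNReal.ofReal_sub _ (by positivity)]
      congr 1
      have htne : t ≠ 0 := ht.ne
      field_simp
      ring
    · intro z hz
      simp only [mem_setOf_eq] at hz ⊢
      linarith
    · exact (measurableSet_le (by measurability) (by measurability)).nullMeasurableSet
  · -- empty case
    have hset : slc t s = ∅ := by
      ext z
      have hnz : (0:ℝ) ≤ s^2 + ‖z‖^2 := by positivity
      have hsq : Real.sqrt (s^2 + ‖z‖^2) ^ 2 = s^2 + ‖z‖^2 := Real.sq_sqrt hnz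
      have hsn := Real.sqrt_nonneg (s^2 + ‖z‖^2)
      simp only [slc, mem_setOf_eq, mem_empty_iff_false, iff_false, not_and, not_lt]
      intro h1
      have hw1 : s^2 + ‖z‖^2 < 1 := (sqrt_lt_one_iff hnz).1 h1
      -- s ≥ -t > 0, so s/(-t) ≥ 1 > sqrt, so t*sqrt ≥ -s
      nlinarith
    rw [hset, measure_empty, Eq.comm, ENNReal.ofReal_eq_zero]
    have : 1 ≤ s^2 / t^2 := by
      rw [le_div_iff₀ ht2]; nlinarith
    nlinarith [Real.pi_pos]


lemma lint_piece_Ioo {a b : ℝ} (hab : a ≤ b) {f : ℝ → ℝ} (hf : Continuous f)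
    (h0 : ∀ s ∈ Ioo a b, 0 ≤ f s) :
    ∫⁻ s in Ioo a b, ENNReal.ofReal (f s) = ENNReal.ofReal (∫ s in a..b, f s) := by
  rw [intervalIntegral.integral_of_le hab, MeasureTheory.integral_Ioc_eq_integral_Ioo,
    ofReal_integral_eq_lintegral_ofReal
      ((hf.integrableOn_Icc).mono_set Ioo_subset_Icc_self)
      ((ae_restrict_iff' measurableSet_Ioo).2 (Filter.Eventually.of_forall h0))]

lemma lint_piece_Ioc {a b : ℝ} (hab : a ≤ b) {f : ℝ → ℝ} (hf : Continuous f)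
    (h0 : ∀ s ∈ Ioc a b, 0 ≤ f s) :
    ∫⁻ s in Ioc a b, ENNReal.ofReal (f s) = ENNReal.ofReal (∫ s in a..b, f s) := by
  rw [intervalIntegral.integral_of_le hab,
    ofReal_integral_eq_lintegral_ofReal
      ((hf.integrableOn_Icc).mono_set Ioc_subset_Icc_self)
      ((ae_restrict_iff' measurableSet_Ioc).2 (Filter.Eventually.of_forall h0))]

lemma integral_onesub (a b : ℝ) :
    ∫ s in a..b, Real.pi * (1 - s^2) = Real.pi * ((b - b^3/3) - (a - a^3/3)) := by
  have : ∀ s : ℝ, Real.pi * (1 - s^2) = Real.pi - Real.pi * s^2 := fun s => by ring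
  simp_rw [this]
  rw [intervalIntegral.integral_sub intervalIntegrable_const
    ((intervalIntegral.intervalIntegrable_pow 2).const_mul Real.pi),
    intervalIntegral.integral_const_mul, integral_pow, intervalIntegral.integral_const]
  simp only [smul_eq_mul]
  ring

lemma integral_oneSubDiv (t a b : ℝ) :
    ∫ s in a..b, Real.pi * (1 - s^2/t^2)
      = Real.pi * (b - a) - Real.pi/t^2 * ((b^3 - a^3)/3) := by
  have h : ∀ s : ℝ, Real.pi * (1 - s^2/t^2) = Real.pi - (Real.pi/t^2) * s^2 :=
    fun s => by ring
  simp_rw [h]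
  rw [intervalIntegral.integral_sub intervalIntegrable_const
      ((intervalIntegral.intervalIntegrable_pow 2).const_mul _),
    intervalIntegral.integral_const_mul, integral_pow, intervalIntegral.integral_const]
  simp only [smul_eq_mul]
  norm_num
  ring

lemma integral_sqA (t a b : ℝ) :
    ∫ s in a..b, Real.pi * (s^2 * (1-t^2) / t^2)
      = Real.pi * (1-t^2) / t^2 * ((b^3 - a^3)/3) := by
  have h : ∀ s : ℝ, Real.pi * (s^2 * (1-t^2) / t^2)
      = (Real.pi * (1-t^2) / t^2) * s^2 := fun s => by ring
  simp_rw [h]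
  rw [intervalIntegral.integral_const_mul, integral_pow]
  norm_num

theorem coneVol {t : ℝ} (ht1 : -1 ≤ t) (ht2 : t ≤ 1) :
    volume {y : E3 | ‖y‖ < 1 ∧ t * ‖y‖ + y 0 < 0}
      = ENNReal.ofReal (2 * Real.pi / 3 * (1 - t)) := by
  have hy0 : Measurable fun y : E3 => y 0 :=
    (measurable_pi_apply 0).comp ((MeasurableEquiv.toLp 2 (Fin 3 → ℝ)).symm).measurable
  have hNmeas : MeasurableSet {y : E3 | ‖y‖ < 1 ∧ t * ‖y‖ + y 0 < 0} := by
    refine MeasurableSet.inter ?_ ?_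
    · exact measurableSet_lt measurable_norm measurable_const
    · exact measurableSet_lt ((measurable_norm.const_mul t).add hy0) measurable_const
  rw [← ψ_measurePreserving.measure_preimage hNmeas.nullMeasurableSet,
    MeasureTheory.Measure.volume_eq_prod,
    Measure.prod_apply (ψ_measurePreserving.measurable hNmeas)]
  have hslice : ∀ s : ℝ, (Prod.mk s ⁻¹' (ψ ⁻¹' {y : E3 | ‖y‖ < 1 ∧ t * ‖y‖ + y 0 < 0}))
      = slc t s := by
    intro s
    ext z
    simp only [mem_preimage, mem_setOf_eq, slc, ψ_norm, ψ_apply_zero]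
  simp_rw [hslice]
  have h0ae : ∀ᵐ (s : ℝ) ∂volume, s ≠ 0 := by
    refine ae_iff.2 ?_
    simp [Real.volume_singleton]
  rcases le_or_gt 0 t with htpos | htneg
  · -- case 0 ≤ t ≤ 1
    have hcong : ∀ᵐ (s : ℝ) ∂volume, volume (slc t s) =
        (Ioo (-t) 0).indicator (fun s => ENNReal.ofReal (Real.pi * (s^2*(1-t^2)/t^2))) s
        + (Ioc (-1) (-t)).indicator (fun s => ENNReal.ofReal (Real.pi * (1-s^2))) s := by
      filter_upwards [h0ae] with s hs
      rcases lt_or_gt_of_ne hs with hsneg | hspos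
      · rcases lt_or_ge (-t) s with hmid | hlow
        · have htpos' : 0 < t := by nlinarith
          rw [sliceA_mid htpos' hmid hsneg,
            indicator_of_mem (show s ∈ Ioo (-t) 0 from ⟨hmid, hsneg⟩),
            indicator_of_notMem (by simp only [mem_Ioc]; intro h; linarith)]
          simp
        · rw [sliceA_low htpos hsneg hlow,
            indicator_of_notMem (by simp only [mem_Ioo]; intro h; linarith)]
          rcases lt_or_ge (-1) s with hgt | hle
          · have hmem : s ∈ Ioc (-1) (-t) := ⟨hgt, hlow⟩
            rw [indicator_of_mem hmem]
            simp
          · rw [indicator_of_notMem (by simp only [mem_Ioc]; intro h; linarith)]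
            rw [add_zero, ENNReal.ofReal_eq_zero]
            have h1 : 1 ≤ s^2 := by nlinarith [sq_nonneg (s+1)]
            nlinarith [Real.pi_pos]
      · rw [sliceA_nonneg htpos hspos.le, measure_empty,
          indicator_of_notMem (by simp only [mem_Ioo]; intro h; linarith),
          indicator_of_notMem (by simp only [mem_Ioc]; intro h; linarith), add_zero]
    rw [lintegral_congr_ae hcong,
      lintegral_add_left (Measurable.indicator (by fun_prop) measurableSet_Ioo)]
    rw [lintegral_indicator measurableSet_Ioo, lintegral_indicator measurableSet_Ioc,
        lint_piece_Ioo (by linarith) (by fun_prop)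
          (fun s _ => mul_nonneg Real.pi_pos.le
            (div_nonneg (mul_nonneg (sq_nonneg s) (by nlinarith)) (sq_nonneg t))),
        lint_piece_Ioc (by linarith) (by fun_prop)
          (fun s hsm => by
            simp only [mem_Ioc] at hsm
            nlinarith [mul_pos (show (0:ℝ) < 1 + s by linarith [hsm.1])
              (show (0:ℝ) < 1 - s by nlinarith [hsm.2]), Real.pi_pos]),
        integral_sqA, integral_onesub,
        ← ENNReal.ofReal_add (by
          rw [show ((0:ℝ)^3-(-t)^3)/3 = t^3/3 by ring]
          exact mul_nonneg (div_nonneg (mul_nonneg Real.pi_pos.le (by nlinarith))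
            (sq_nonneg t)) (div_nonneg (pow_nonneg htpos 3) (by norm_num)))
          (by nlinarith [Real.pi_pos, sq_nonneg (1-t), mul_nonneg (sq_nonneg (1-t)) (show (0:ℝ) ≤ t + 2 by linarith)])]
    congr 1
    rcases eq_or_lt_of_le htpos with ht0 | ht0
    · rw [← ht0]; norm_num; ring
    · field_simp
      ring
  · -- case -1 ≤ t < 0
    have hcong : ∀ᵐ (s : ℝ) ∂volume, volume (slc t s) =
        (Ioo (-1) 0).indicator (fun s => ENNReal.ofReal (Real.pi * (1-s^2))) s
        + (Ioo 0 (-t)).indicator (fun s => ENNReal.ofReal (Real.pi * (1-s^2/t^2))) s := by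
      filter_upwards [h0ae] with s hs
      have ht2 : (0:ℝ) < t^2 := by nlinarith
      rcases lt_or_gt_of_ne hs with hsneg | hspos
      · rw [sliceB_neg htneg.le hsneg,
          indicator_of_notMem (show s ∉ Ioo (0:ℝ) (-t) from fun h => absurd h.1 (by linarith)),
          add_zero]
        rcases lt_or_ge (-1) s with hgt | hle
        · have hmem : s ∈ Ioo (-1:ℝ) 0 := ⟨hgt, hsneg⟩
          rw [indicator_of_mem hmem]
        · rw [indicator_of_notMem
            (show s ∉ Ioo (-1:ℝ) 0 from fun h => absurd h.1 (by linarith)),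
            ENNReal.ofReal_eq_zero]
          have h1 : 1 ≤ s^2 := by nlinarith [sq_nonneg (s+1)]
          nlinarith [Real.pi_pos]
      · rw [sliceB_pos ht1 htneg hspos,
          indicator_of_notMem (show s ∉ Ioo (-1:ℝ) 0 from fun h => absurd h.2 (by linarith)),
          zero_add]
        rcases lt_or_ge s (-t) with hlt | hge
        · have hmem : s ∈ Ioo 0 (-t) := ⟨hspos, hlt⟩
          rw [indicator_of_mem hmem]
        · rw [indicator_of_notMem (by simp only [mem_Ioo]; intro h; linarith),
            ENNReal.ofReal_eq_zero]
          have hs2 : t^2 ≤ s^2 := by nlinarith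
          have : (1:ℝ) ≤ s^2/t^2 := by rw [le_div_iff₀ ht2]; linarith
          nlinarith [Real.pi_pos]
    rw [lintegral_congr_ae hcong,
      lintegral_add_left (Measurable.indicator (by fun_prop) measurableSet_Ioo)]
    have ht2 : (0:ℝ) < t^2 := by nlinarith
    have hint : ∀ s : ℝ, Real.pi * (1-s^2/t^2) = Real.pi - (Real.pi/t^2) * s^2 := by
      intro s; field_simp
    rw [lintegral_indicator measurableSet_Ioo, lintegral_indicator measurableSet_Ioo,
        lint_piece_Ioo (by linarith) (by fun_prop)
          (fun s hsm => by
            simp only [mem_Ioo] at hsm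
            nlinarith [mul_pos (show (0:ℝ) < 1 + s by linarith [hsm.1])
              (show (0:ℝ) < 1 - s by linarith [hsm.2]), Real.pi_pos]),
        lint_piece_Ioo (by linarith) (by fun_prop)
          (fun s hsm => by
            simp only [mem_Ioo] at hsm
            have hs2 : s^2 < t^2 := by nlinarith
            have : s^2/t^2 < 1 := by rw [div_lt_one ht2]; linarith
            nlinarith [Real.pi_pos]),
        integral_onesub, integral_oneSubDiv,
      ← ENNReal.ofReal_add (by nlinarith [Real.pi_pos])
        (by
          rw [show Real.pi/t^2*((((-t)^3 - (0:ℝ)^3))/3) = -(Real.pi*t)/3 from by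
            have htne : t ≠ 0 := ne_of_lt htneg
            field_simp; ring]
          nlinarith [Real.pi_pos])]
    congr 1
    have htne : t ≠ 0 := ne_of_lt htneg
    field_simp
    ring


lemma measurable_y0 : Measurable fun y : E3 => y 0 :=
  (measurable_pi_apply 0).comp ((MeasurableEquiv.toLp 2 (Fin 3 → ℝ)).symm).measurable

lemma ballIntegral {t : ℝ} (ht1 : -1 ≤ t) (ht2 : t ≤ 1) :
    ∫ y in ball (0:E3) 1, sgn' (t * ‖y‖ + y 0) = 4 * Real.pi / 3 * t := by
  have hNmeas : MeasurableSet {y : E3 | t * ‖y‖ + y 0 < 0} :=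
    measurableSet_lt ((measurable_norm.const_mul t).add measurable_y0) measurable_const
  have hpt : ∀ y : E3, sgn' (t * ‖y‖ + y 0)
      = 1 - 2 * Set.indicator {y : E3 | t * ‖y‖ + y 0 < 0} (fun _ => (1:ℝ)) y := by
    intro y
    by_cases h : t * ‖y‖ + y 0 < 0
    · rw [indicator_of_mem (show y ∈ {y : E3 | t * ‖y‖ + y 0 < 0} from h)]
      unfold sgn'
      rw [if_neg (not_le.2 h)]
      ring
    · rw [indicator_of_notMem (show y ∉ {y : E3 | t * ‖y‖ + y 0 < 0} from h)]
      unfold sgn'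
      rw [if_pos (not_lt.1 h)]
      ring
  simp_rw [hpt]
  have hind : Integrable
      (Set.indicator {y : E3 | t * ‖y‖ + y 0 < 0} (fun _ => (1:ℝ)))
      (volume.restrict (ball (0:E3) 1)) := by
    refine Integrable.indicator ?_ hNmeas
    exact integrableOn_const measure_ball_lt_top.ne
  have X := integral_sub (integrableOn_const measure_ball_lt_top.ne : IntegrableOn (fun _ => (1:ℝ)) (ball (0:E3) 1)) (hind.const_mul 2)
  rw [X,
    integral_const_mul, setIntegral_const, setIntegral_indicator hNmeas, setIntegral_const]
  have hset : ball (0:E3) 1 ∩ {y : E3 | t * ‖y‖ + y 0 < 0}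
      = {y : E3 | ‖y‖ < 1 ∧ t * ‖y‖ + y 0 < 0} := by
    ext y
    simp [mem_ball_zero_iff, mem_setOf_eq]
  rw [measureReal_def, measureReal_def, hset, coneVol ht1 ht2, vol_ball3, ENNReal.toReal_ofReal (by positivity),
    ENNReal.toReal_ofReal (by nlinarith [Real.pi_pos])]
  simp only [smul_eq_mul, mul_one]
  ring

lemma rotate (a : E3) (ha : a ≠ 0) (c : ℝ) :
    ∫ x in ball (0:E3) 1, sgn' (c * ‖x‖ + inner ℝ x a)
      = ∫ y in ball (0:E3) 1, sgn' (c * ‖y‖ + ‖a‖ * y 0) := by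
  have hna : (0:ℝ) < ‖a‖ := norm_pos_iff.2 ha
  set u : E3 := ‖a‖⁻¹ • a with hu_def
  have hu : ‖u‖ = 1 := by
    rw [hu_def, norm_smul, norm_inv, norm_norm, inv_mul_cancel₀ hna.ne']
  have horth : Orthonormal ℝ (({0} : Set (Fin 3)).restrict (fun _ => u)) := by
    constructor
    · intro i; exact hu
    · intro i j hij
      exact absurd (Subsingleton.elim i j) hij
  obtain ⟨b, hb⟩ := horth.exists_orthonormalBasis_extension_of_card_eq
    (by simp [finrank_euclideanSpace])
  have hb0 : b 0 = u := hb 0 rfl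
  have mp : MeasurePreserving b.repr volume volume := b.measurePreserving_repr
  have hemb : MeasurableEmbedding b.repr :=
    b.repr.toHomeomorph.measurableEmbedding
  have key := mp.setIntegral_preimage_emb hemb
    (fun y : E3 => sgn' (c * ‖y‖ + ‖a‖ * y 0)) (ball (0:E3) 1)
  have hpre : (⇑b.repr) ⁻¹' (ball (0:E3) 1) = ball (0:E3) 1 := by
    ext x
    simp [mem_ball_zero_iff, b.repr.norm_map]
  rw [hpre] at key
  rw [← key]
  apply setIntegral_congr_fun measurableSet_ball
  intro x _
  have h1 : ‖b.repr x‖ = ‖x‖ := b.repr.norm_map x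
  have h2 : b.repr x 0 = inner ℝ u x := b.repr_apply_apply x 0 ▸ by rw [hb0]
  have h3 : ‖a‖ * (inner ℝ u x : ℝ) = inner ℝ x a := by
    rw [hu_def, real_inner_smul_left, ← real_inner_comm]
    field_simp
  dsimp only
  rw [h1, h2, h3]


lemma sphere_mass :
    ((volume : Measure E3).toSphere univ).toReal = 4 * Real.pi := by
  rw [Measure.toSphere_apply_univ, vol_ball3]
  rw [finrank_euclideanSpace_fin]
  rw [ENNReal.toReal_mul, ENNReal.toReal_ofReal (by positivity)]
  simp
  ring

lemma sphere_to_ball (c : ℝ) (a : E3) :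
    ∫ ω : sphere (0:E3) 1, sgn' (c + (inner ℝ (ω : E3) a : ℝ))
        ∂((volume : Measure E3).toSphere)
      = 3 * ∫ x in ball (0:E3) 1, sgn' (c * ‖x‖ + (inner ℝ x a : ℝ)) := by
  set g : sphere (0:E3) 1 → ℝ := fun ω => sgn' (c + (inner ℝ (ω : E3) a : ℝ)) with hg
  set k : (Set.Ioi (0:ℝ)) → ℝ :=
    (Iio (⟨1, mem_Ioi.2 one_pos⟩ : Set.Ioi (0:ℝ))).indicator (fun _ => 1) with hk
  set F : E3 → ℝ := fun x =>
    sgn' (c * ‖x‖ + (inner ℝ x a : ℝ)) * (ball (0:E3) 1).indicator (fun _ => (1:ℝ)) x with hF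
  have hdim : Module.finrank ℝ E3 = 3 := finrank_euclideanSpace_fin
  have hH := (volume : Measure E3).measurePreserving_homeomorphUnitSphereProd.integral_comp
    (Homeomorph.measurableEmbedding _) (fun p => g p.1 * k p.2)
  have hcomp : ∀ x : ({0}ᶜ : Set E3),
      g ((homeomorphUnitSphereProd E3) x).1 * k ((homeomorphUnitSphereProd E3) x).2
        = F (x : E3) := by
    intro x
    have hx0 : (x : E3) ≠ 0 := x.2
    have hnx : 0 < ‖(x : E3)‖ := norm_pos_iff.2 hx0
    have hgpart : g ((homeomorphUnitSphereProd E3) x).1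
        = sgn' (c * ‖(x : E3)‖ + (inner ℝ (x : E3) a : ℝ)) := by
      rw [hg]
      simp only [homeomorphUnitSphereProd_apply_fst_coe]
      rw [real_inner_smul_left]
      rw [← sgn'_mul_pos hnx (c + ‖(x : E3)‖⁻¹ * (inner ℝ (x : E3) a : ℝ))]
      congr 1
      field_simp
    have hkpart : k ((homeomorphUnitSphereProd E3) x).2
        = (ball (0:E3) 1).indicator (fun _ => (1:ℝ)) (x : E3) := by
      rw [hk]
      by_cases h : ‖(x : E3)‖ < 1
      · rw [indicator_of_mem (by
            simp only [mem_Iio, Subtype.mk_lt_mk, homeomorphUnitSphereProd_apply_snd_coe]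
            exact Subtype.mk_lt_mk.2 (by simpa using h)),
          indicator_of_mem (mem_ball_zero_iff.2 h)]
      · rw [indicator_of_notMem (by
            simp only [mem_Iio]
            intro hmem
            exact h (by simpa [homeomorphUnitSphereProd_apply_snd_coe] using Subtype.coe_lt_coe.2 hmem)),
          indicator_of_notMem (fun hmem => h (mem_ball_zero_iff.1 hmem))]
    rw [hgpart, hkpart, hF]
  have lhs_eq : ∫ x : ({0}ᶜ : Set E3), F (x : E3) ∂((volume : Measure E3).comap Subtype.val)
      = ∫ x in ball (0:E3) 1, sgn' (c * ‖x‖ + (inner ℝ x a : ℝ)) := by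
    rw [integral_subtype_comap (measurableSet_singleton (0:E3)).compl F,
      MeasureTheory.restrict_compl_singleton]
    have : ∀ x : E3, F x
        = (ball (0:E3) 1).indicator (fun x => sgn' (c * ‖x‖ + (inner ℝ x a : ℝ))) x := by
      intro x
      by_cases hx : x ∈ ball (0:E3) 1
      · rw [hF]; simp only [indicator_of_mem hx, mul_one]
      · rw [hF]; simp only [indicator_of_notMem hx, mul_zero]
    simp_rw [this]
    rw [integral_indicator measurableSet_ball]
  have hk_int : ∫ r : (Set.Ioi (0:ℝ)), k r ∂(Measure.volumeIoiPow (Module.finrank ℝ E3 - 1))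
      = 1/3 := by
    rw [hk, integral_indicator_const (1:ℝ) measurableSet_Iio]
    rw [hdim]
    have : (2:ℕ) + 1 = 3 := rfl
    rw [show Module.finrank ℝ E3 - 1 = 2 from by rw [hdim]] at *
    rw [measureReal_def, Measure.volumeIoiPow_apply_Iio]
    simp only [smul_eq_mul, mul_one]
    rw [ENNReal.toReal_ofReal (by norm_num)]
    norm_num
  calc ∫ ω : sphere (0:E3) 1, g ω ∂((volume : Measure E3).toSphere)
      = (∫ ω : sphere (0:E3) 1, g ω ∂((volume : Measure E3).toSphere))
        * (3 * (1/3)) := by norm_num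
    _ = 3 * ((∫ ω : sphere (0:E3) 1, g ω ∂((volume : Measure E3).toSphere))
        * ∫ r : (Set.Ioi (0:ℝ)), k r ∂(Measure.volumeIoiPow (Module.finrank ℝ E3 - 1))) := by
        rw [hk_int]; ring
    _ = 3 * ∫ p : (sphere (0:E3) 1) × (Set.Ioi (0:ℝ)), g p.1 * k p.2
        ∂(((volume : Measure E3).toSphere).prod
          (Measure.volumeIoiPow (Module.finrank ℝ E3 - 1))) := by
        rw [← integral_prod_mul g k]
    _ = 3 * ∫ x : ({0}ᶜ : Set E3), F (x : E3) ∂((volume : Measure E3).comap Subtype.val) := by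
        rw [← hH]
        congr 1
        exact integral_congr_ae (Filter.Eventually.of_forall fun x => hcomp x)
    _ = 3 * ∫ x in ball (0:E3) 1, sgn' (c * ‖x‖ + (inner ℝ x a : ℝ)) := by rw [lhs_eq]


lemma dotE_eq_inner (u v : EuclideanSpace ℝ (Fin 3)) : dotE u v = (inner ℝ u v : ℝ) := by
  rw [dotE, PiLp.inner_apply, Fin.sum_univ_three]
  simp [RCLike.inner_apply, mul_comm]

/-- Hidden-variable model for a single spin 1/2: averaging the value-function
`ω ↦ a₀ + ‖a‖·sgn((p + ω)·a)` over the unit sphere `S² ⊂ ℝ³` (with its surface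
measure of total mass `4π`) reproduces the quantum expectation value `a₀ + p·a`. -/
theorem hidden_variable_spin_half
    (a p : EuclideanSpace ℝ (Fin 3)) (ha : a ≠ 0) (a₀ : ℝ) (hp : ‖p‖ ≤ 1) :
    (1 / (4 * Real.pi)) *
      ∫ ω : sphere (0 : EuclideanSpace ℝ (Fin 3)) 1,
        (a₀ + ‖a‖ * sgn' (dotE (p + (ω : EuclideanSpace ℝ (Fin 3))) a))
        ∂((volume : Measure (EuclideanSpace ℝ (Fin 3))).toSphere)
      = a₀ + dotE p a := by
  have hna : (0:ℝ) < ‖a‖ := norm_pos_iff.2 ha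
  set c : ℝ := dotE p a with hc
  have hc_inner : c = (inner ℝ p a : ℝ) := dotE_eq_inner p a
  set t : ℝ := c / ‖a‖ with ht
  have habs : |c| ≤ ‖a‖ := by
    rw [hc_inner]
    refine (abs_real_inner_le_norm p a).trans ?_
    nlinarith
  have hcle := abs_le.1 habs
  have ht1 : -1 ≤ t := by
    rw [ht, le_div_iff₀ hna]
    linarith [hcle.1]
  have ht2 : t ≤ 1 := by
    rw [ht, div_le_one hna]
    exact hcle.2
  have hint_eq : ∀ ω : sphere (0:E3) 1,
      dotE (p + (ω : E3)) a = c + (inner ℝ (ω : E3) a : ℝ) := by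
    intro ω
    rw [dotE_eq_inner, inner_add_left, hc_inner]
  simp_rw [hint_eq]
  have hgmeas : AEStronglyMeasurable
      (fun ω : sphere (0:E3) 1 => sgn' (c + (inner ℝ (ω : E3) a : ℝ)))
      ((volume : Measure E3).toSphere) :=
    (sgn'_measurable.comp
      ((continuous_const.add ((continuous_subtype_val).inner continuous_const)).measurable)
      ).aestronglyMeasurable
  have hgint : Integrable
      (fun ω : sphere (0:E3) 1 => sgn' (c + (inner ℝ (ω : E3) a : ℝ)))
      ((volume : Measure E3).toSphere) := by
    refine Integrable.mono' (integrable_const 1) hgmeas ?_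
    refine Filter.Eventually.of_forall fun ω => ?_
    rw [Real.norm_eq_abs]
    exact abs_sgn' _
  rw [integral_add (integrable_const a₀) (hgint.const_mul ‖a‖), integral_const,
    integral_const_mul, sphere_to_ball c a, rotate a ha c]
  have hpoint : ∀ y : E3, sgn' (c * ‖y‖ + ‖a‖ * y 0) = sgn' (t * ‖y‖ + y 0) := by
    intro y
    rw [← sgn'_mul_pos hna (t * ‖y‖ + y 0)]
    congr 1
    rw [ht]
    field_simp
  simp_rw [hpoint]
  rw [ballIntegral ht1 ht2, measureReal_def, sphere_mass]
  have hat : ‖a‖ * t = c := by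
    rw [ht]
    field_simp
  have h2 : ‖a‖ * (3 * (4 * Real.pi / 3 * t)) = 4 * Real.pi * c := by
    rw [← hat]; ring
  rw [h2]
  have hπ : Real.pi ≠ 0 := Real.pi_ne_zero
  rw [smul_eq_mul]
  field_simp
end

section
/- Let n ≥ 1 and let A, B, C, D be Hermitian n×n complex matrices satisfying A² = B² = C² = D² = I, with A and B each commuting with C and with D. Set K := A·(C + D) + B·(C − D) and [X,Y] := X·Y − Y·X. Then K is Hermitian and K² = 4·I − [A,B]·[C,D]. -/
open Matrix
open scoped ComplexOrder

/-- For Hermitian involutions `A, B, C, D` with `A, B` each commuting with `C, D`,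
the CHSH operator `K = A(C+D) + B(C−D)` is Hermitian and satisfies
`K² = 4·I − [A,B]·[C,D]`. -/
theorem chsh_operator_square {n : ℕ} (hn : 1 ≤ n)
    (A B C D : Matrix (Fin n) (Fin n) ℂ)
    (hA : A.IsHermitian) (hB : B.IsHermitian)
    (hC : C.IsHermitian) (hD : D.IsHermitian)
    (hA2 : A * A = 1) (hB2 : B * B = 1) (hC2 : C * C = 1) (hD2 : D * D = 1)
    (hAC : A * C = C * A) (hAD : A * D = D * A)
    (hBC : B * C = C * B) (hBD : B * D = D * B)
    (K : Matrix (Fin n) (Fin n) ℂ)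
    (hK : K = A * (C + D) + B * (C - D)) :
    K.IsHermitian ∧
      K * K = (4 : ℂ) • (1 : Matrix (Fin n) (Fin n) ℂ)
        - (A * B - B * A) * (C * D - D * C) := by
  subst hK
  have hCA : ∀ X, C * (A * X) = A * (C * X) := fun X => by
    rw [← mul_assoc, ← hAC, mul_assoc]
  have hDA : ∀ X, D * (A * X) = A * (D * X) := fun X => by
    rw [← mul_assoc, ← hAD, mul_assoc]
  have hCB : ∀ X, C * (B * X) = B * (C * X) := fun X => by
    rw [← mul_assoc, ← hBC, mul_assoc]
  have hDB : ∀ X, D * (B * X) = B * (D * X) := fun X => by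
    rw [← mul_assoc, ← hBD, mul_assoc]
  have hA2' : ∀ X, A * (A * X) = X := fun X => by
    rw [← mul_assoc, hA2, one_mul]
  have hB2' : ∀ X, B * (B * X) = X := fun X => by
    rw [← mul_assoc, hB2, one_mul]
  have hC2' : ∀ X, C * (C * X) = X := fun X => by
    rw [← mul_assoc, hC2, one_mul]
  have hD2' : ∀ X, D * (D * X) = X := fun X => by
    rw [← mul_assoc, hD2, one_mul]
  constructor
  · unfold Matrix.IsHermitian
    simp only [conjTranspose_add, conjTranspose_sub, conjTranspose_mul,
      hA.eq, hB.eq, hC.eq, hD.eq]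
    rw [add_mul, sub_mul, ← hAC, ← hAD, ← hBC, ← hBD]
    noncomm_ring
  · have expand : (A * (C + D) + B * (C - D)) * (A * (C + D) + B * (C - D))
        = A * (C * (A * C)) + A * (C * (A * D)) + A * (C * (B * C)) - A * (C * (B * D))
        + A * (D * (A * C)) + A * (D * (A * D)) + A * (D * (B * C)) - A * (D * (B * D))
        + B * (C * (A * C)) + B * (C * (A * D)) + B * (C * (B * C)) - B * (C * (B * D))
        - B * (D * (A * C)) - B * (D * (A * D)) - B * (D * (B * C)) + B * (D * (B * D)) := by
      noncomm_ring
    rw [expand]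
    simp only [hCA, hDA, hCB, hDB, hA2', hB2', hC2', hD2', ← hAC, ← hAD, ← hBC, ← hBD, hA2, hB2, hC2, hD2, mul_one]
    have h4 : (4 : ℂ) • (1 : Matrix (Fin n) (Fin n) ℂ) = 1 + 1 + 1 + 1 := by
      rw [show (4:ℂ) = 1+1+1+1 by norm_num]
      simp [add_smul]
    rw [h4]
    noncomm_ring
end

section
/- (Tsirelson inequality.) Let n ≥ 1 and let A, B, C, D be Hermitian n×n complex matrices satisfying A² = B² = C² = D² = I, with A and B each commuting with C and with D. Set K := A·(C + D) + B·(C − D), and let W be a density matrix on ℂ^n (positive semidefinite with trace 1). Then ‖tr(W·K)‖ ≤ 2·√2, where ‖·‖ denotes the complex absolute value. -/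
open Matrix
open scoped ComplexOrder

/-- For commuting square roots of identity: `(x*p)*(x*p) = p*p`. -/
private lemma tsl_sq_comm {R : Type*} [Ring R] (x p : R) (hx : x*x = 1)
    (hxp : x*p = p*x) : (x*p)*(x*p) = p*p := by
  calc (x*p)*(x*p) = x*((p*x)*p) := by noncomm_ring
  _ = x*((x*p)*p) := by rw [hxp]
  _ = (x*x)*(p*p) := by noncomm_ring
  _ = p*p := by rw [hx, one_mul]

/-- The algebraic core: `K² + L² = 8` for the CHSH operators. -/
private lemma tsl_key {R : Type*} [Ring R] (a b c d : R)
    (ha : a*a=1) (hb : b*b=1) (hc : c*c=1) (hd : d*d=1)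
    (hac : a*c=c*a) (had : a*d=d*a) (hbc : b*c=c*b) (hbd : b*d=d*b) :
    (a*(c+d)+b*(c-d)) * (a*(c+d)+b*(c-d))
      + (a*(c+d)-b*(c-d)) * (a*(c+d)-b*(c-d)) = 8 := by
  have h1 : (a*(c+d))*(a*(c+d)) = (c+d)*(c+d) :=
    tsl_sq_comm a (c+d) ha (by rw [mul_add, add_mul, hac, had])
  have h2 : (b*(c-d))*(b*(c-d)) = (c-d)*(c-d) :=
    tsl_sq_comm b (c-d) hb (by rw [mul_sub, sub_mul, hbc, hbd])
  have expand : (a*(c+d)+b*(c-d)) * (a*(c+d)+b*(c-d))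
      + (a*(c+d)-b*(c-d)) * (a*(c+d)-b*(c-d))
      = (a*(c+d))*(a*(c+d)) + (a*(c+d))*(a*(c+d))
        + ((b*(c-d))*(b*(c-d)) + (b*(c-d))*(b*(c-d))) := by noncomm_ring
  rw [expand, h1, h2]
  have : (c+d)*(c+d) + (c+d)*(c+d) + ((c-d)*(c-d) + (c-d)*(c-d))
      = 2*(c*c) + 2*(c*c) + (2*(d*d) + 2*(d*d)) := by noncomm_ring
  rw [this, hc, hd]; norm_num

private lemma tsl_trace_nonneg {n : ℕ} {M : Matrix (Fin n) (Fin n) ℂ} (hM : M.PosSemidef) :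
    0 ≤ M.trace := by
  refine Finset.sum_nonneg fun i _ => ?_
  simpa [dotProduct, mulVec, Pi.single_apply] using hM.dotProduct_mulVec_nonneg (Pi.single i 1)

open scoped MatrixOrder in
private lemma tsl_trace_mul_nonneg {n : ℕ} {P Q : Matrix (Fin n) (Fin n) ℂ}
    (hP : P.PosSemidef) (hQ : Q.PosSemidef) : 0 ≤ (P * Q).trace := by
  set S := CFC.sqrt P with hS
  have hS2 : S * S = P := by
    have := CFC.sq_sqrt P hP.nonneg
    rwa [pow_two] at this
  have hSH : S.IsHermitian := (CFC.sqrt_nonneg P).posSemidef.isHermitian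
  have h1 : (P * Q).trace = (Sᴴ * Q * S).trace := by
    rw [hSH.eq, ← hS2, mul_assoc, trace_mul_comm, mul_assoc]
  rw [h1]
  exact tsl_trace_nonneg (hQ.conjTranspose_mul_mul_same S)

/-- If `c² • 1 - K² ⪰ 0` for a Hermitian `K`, then `c • 1 - K ⪰ 0`. -/
private lemma tsl_psd_of_sq {n : ℕ} {K : Matrix (Fin n) (Fin n) ℂ} (hKH : K.IsHermitian)
    {c : ℝ} (hc : 0 ≤ c)
    (hP : (((c^2 : ℝ) : ℂ) • 1 - K * K).PosSemidef) :
    ((c:ℂ) • 1 - K).PosSemidef := by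
  classical
  -- eigenvalue bound
  have heig : ∀ i, hKH.eigenvalues i ≤ c := by
    intro i
    set μ : ℝ := hKH.eigenvalues i with hμ
    set v : Fin n → ℂ := ⇑(hKH.eigenvectorBasis i) with hv
    have hvv : star v ⬝ᵥ v = 1 := by
      have horth := hKH.eigenvectorBasis.orthonormal
      have h1 : (inner ℂ (hKH.eigenvectorBasis i) (hKH.eigenvectorBasis i) : ℂ) = 1 :=
        orthonormal_iff_ite.mp horth i i |>.trans (by simp)
      rw [← h1]
      rw [EuclideanSpace.inner_eq_star_dotProduct, dotProduct_comm]
    have hKv : K *ᵥ v = (μ:ℂ) • v := by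
      have := hKH.mulVec_eigenvectorBasis i
      rw [hv, hμ, this]
      ext j
      simp [Complex.real_smul]
    have hval : star v ⬝ᵥ ((((c^2:ℝ):ℂ) • (1 : Matrix (Fin n) (Fin n) ℂ) - K * K) *ᵥ v)
        = ((c^2 - μ^2 : ℝ) : ℂ) := by
      rw [Matrix.sub_mulVec, Matrix.smul_mulVec, Matrix.one_mulVec,
        ← Matrix.mulVec_mulVec, hKv, Matrix.mulVec_smul, hKv]
      rw [dotProduct_sub, dotProduct_smul, dotProduct_smul, dotProduct_smul, hvv]
      simp [smul_eq_mul]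
      push_cast
      ring
    have h0 := hP.dotProduct_mulVec_nonneg v
    rw [hval] at h0
    have hle : (0:ℝ) ≤ c^2 - μ^2 := by rwa [Complex.zero_le_real] at h0
    nlinarith [sq_abs μ, abs_nonneg μ, neg_abs_le μ, le_abs_self μ]
  -- spectral decomposition
  set U : Matrix (Fin n) (Fin n) ℂ := (hKH.eigenvectorUnitary : Matrix (Fin n) (Fin n) ℂ)
    with hUdef
  have hUU : U * star U = 1 := (Unitary.mem_iff.mp hKH.eigenvectorUnitary.2).2
  have hspec := hKH.spectral_theorem
  have h1 : (c:ℂ) • (1 : Matrix (Fin n) (Fin n) ℂ) = U * ((c:ℂ) • 1) * star U := by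
    rw [Matrix.mul_smul, Matrix.smul_mul, mul_one, hUU]
  have h2 : U * ((c:ℂ) • 1) * star U
        - U * diagonal (RCLike.ofReal ∘ hKH.eigenvalues) * star U
      = U * diagonal (fun i => ((c - hKH.eigenvalues i : ℝ) : ℂ)) * star U := by
    rw [← Matrix.sub_mul, ← Matrix.mul_sub]
    congr 2
    rw [Matrix.smul_one_eq_diagonal, Matrix.diagonal_sub]
    congr 1
    funext i
    simp [Function.comp]
  have key : (c:ℂ) • 1 - K
      = U * diagonal (fun i => ((c - hKH.eigenvalues i : ℝ) : ℂ)) * star U := by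
    calc (c:ℂ) • 1 - K
        = U * ((c:ℂ) • 1) * star U
          - U * diagonal (RCLike.ofReal ∘ hKH.eigenvalues) * star U := by
          rw [← h1]; congr 1
    _ = _ := h2
  rw [key]
  have hdiag : (diagonal (fun i => ((c - hKH.eigenvalues i : ℝ) : ℂ))).PosSemidef := by
    refine Matrix.PosSemidef.diagonal ?_
    intro i
    simp only [Pi.zero_apply]
    rw [Complex.zero_le_real]
    linarith [heig i]
  have := hdiag.mul_mul_conjTranspose_same U
  rwa [← Matrix.star_eq_conjTranspose] at this

/-- The Tsirelson inequality: `|tr(W·K)| ≤ 2√2` for the CHSH operator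
`K = A(C+D) + B(C−D)` in any state `W`. -/
theorem tsirelson_bound {n : ℕ} (hn : 1 ≤ n)
    (A B C D : Matrix (Fin n) (Fin n) ℂ)
    (hA : A.IsHermitian) (hB : B.IsHermitian)
    (hC : C.IsHermitian) (hD : D.IsHermitian)
    (hA2 : A * A = 1) (hB2 : B * B = 1) (hC2 : C * C = 1) (hD2 : D * D = 1)
    (hAC : A * C = C * A) (hAD : A * D = D * A)
    (hBC : B * C = C * B) (hBD : B * D = D * B)
    (K : Matrix (Fin n) (Fin n) ℂ)
    (hK : K = A * (C + D) + B * (C - D))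
    (W : Matrix (Fin n) (Fin n) ℂ)
    (hW : W.PosSemidef) (htr : W.trace = 1) :
    ‖(W * K).trace‖ ≤ 2 * Real.sqrt 2 := by
  classical
  set c : ℝ := 2 * Real.sqrt 2 with hc
  have hcsq : c ^ 2 = 8 := by
    rw [hc, mul_pow, Real.sq_sqrt (by norm_num : (0:ℝ) ≤ 2)]; norm_num
  have hcpos : 0 ≤ c := by positivity
  set L : Matrix (Fin n) (Fin n) ℂ := A * (C + D) - B * (C - D) with hL
  have hACD : A * (C + D) = (C + D) * A := by rw [mul_add, add_mul, hAC, hAD]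
  have hBCD : B * (C - D) = (C - D) * B := by rw [mul_sub, sub_mul, hBC, hBD]
  have hKH : K.IsHermitian := by
    show Kᴴ = K
    rw [hK, conjTranspose_add, conjTranspose_mul, conjTranspose_mul,
      conjTranspose_add, conjTranspose_sub, hA.eq, hB.eq, hC.eq, hD.eq, ← hACD, ← hBCD]
  have hLH : L.IsHermitian := by
    show Lᴴ = L
    rw [hL, conjTranspose_sub, conjTranspose_mul, conjTranspose_mul,
      conjTranspose_add, conjTranspose_sub, hA.eq, hB.eq, hC.eq, hD.eq, ← hACD, ← hBCD]
  have hsum : K * K + L * L = (8 : Matrix (Fin n) (Fin n) ℂ) := by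
    rw [hK, hL]
    exact tsl_key A B C D hA2 hB2 hC2 hD2 hAC hAD hBC hBD
  have h8 : (8 : Matrix (Fin n) (Fin n) ℂ) = ((c^2:ℝ):ℂ) • 1 := by
    rw [hcsq, Matrix.smul_one_eq_diagonal]
    norm_num
    rfl
  have hLL : L * L = ((c^2:ℝ):ℂ) • 1 - K * K := by
    rw [← h8]; exact eq_sub_of_add_eq' hsum
  have hPSD8 : (((c^2:ℝ):ℂ) • (1 : Matrix (Fin n) (Fin n) ℂ) - K * K).PosSemidef := by
    have h := posSemidef_conjTranspose_mul_self L
    rw [hLH.eq] at h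
    rwa [hLL] at h
  have hplus : ((c:ℂ) • 1 - K).PosSemidef := tsl_psd_of_sq hKH hcpos hPSD8
  have hminus : ((c:ℂ) • 1 + K).PosSemidef := by
    have hnegH : (-K).IsHermitian := hKH.neg
    have hP' : (((c^2:ℝ):ℂ) • (1 : Matrix (Fin n) (Fin n) ℂ) - (-K) * (-K)).PosSemidef := by
      rwa [neg_mul_neg]
    have := tsl_psd_of_sq hnegH hcpos hP'
    rwa [sub_neg_eq_add] at this
  set t : ℂ := (W * K).trace with ht
  have h1 : (W * K)ᴴ.trace = t := by
    rw [conjTranspose_mul, hKH.eq, hW.isHermitian.eq, trace_mul_comm]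
  have h3 : star t = t := by
    conv_rhs => rw [← h1]
    rw [trace_conjTranspose]
  have htim : t.im = 0 := by
    have := congrArg Complex.im h3
    simp only [Complex.star_def, Complex.conj_im] at this
    linarith
  have hup : t.re ≤ c := by
    have h1' := tsl_trace_mul_nonneg hW hplus
    have h2 : (W * ((c:ℂ) • 1 - K)).trace = (c:ℂ) - t := by
      rw [Matrix.mul_sub, Matrix.mul_smul, mul_one, trace_sub, trace_smul, htr, smul_eq_mul,
        mul_one]
    rw [h2] at h1'
    have := (Complex.le_def.mp h1').1
    simpa using this
  have hlo : -c ≤ t.re := by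
    have h1' := tsl_trace_mul_nonneg hW hminus
    have h2 : (W * ((c:ℂ) • 1 + K)).trace = (c:ℂ) + t := by
      rw [Matrix.mul_add, Matrix.mul_smul, mul_one, trace_add, trace_smul, htr, smul_eq_mul,
        mul_one]
    rw [h2] at h1'
    have := (Complex.le_def.mp h1').1
    simp at this
    linarith
  have hteq : t = (t.re : ℂ) := Complex.ext rfl (by simp [htim])
  have habs : ‖t‖ = |t.re| := by
    conv_lhs => rw [hteq]
    rw [Complex.norm_real, Real.norm_eq_abs]
  rw [habs]
  exact abs_le.mpr ⟨hlo, hup⟩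
end

section
/- (Bell–Clauser–Horne–Shimony–Holt inequality.) Let n ≥ 1 and let A, B, C, D be Hermitian n×n complex matrices satisfying A² = B² = C² = D² = I, with A and B each commuting with C and with D. Set K := A·(C + D) + B·(C − D) and [X,Y] := X·Y − Y·X, and let W be a density matrix on ℂ^n (positive semidefinite with trace 1). If Re(tr(W·[A,B]·[C,D])) ≥ 0, then ‖tr(W·K)‖ ≤ 2, where ‖·‖ denotes the complex absolute value. -/
open Matrix
open scoped ComplexOrder

lemma trace_cs {n : ℕ} (X Y : Matrix (Fin n) (Fin n) ℂ) :
    ‖(Xᴴ * Y).trace‖ ≤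
      Real.sqrt ((Xᴴ * X).trace.re) * Real.sqrt ((Yᴴ * Y).trace.re) := by
  let x : EuclideanSpace ℂ (Fin n × Fin n) := WithLp.toLp 2 (fun p : Fin n × Fin n => X p.1 p.2)
  let y : EuclideanSpace ℂ (Fin n × Fin n) := WithLp.toLp 2 (fun p : Fin n × Fin n => Y p.1 p.2)
  have h1 : (Xᴴ * Y).trace = inner (𝕜 := ℂ) x y := by
    simp only [Matrix.trace, Matrix.diag, Matrix.mul_apply, conjTranspose_apply,
      PiLp.inner_apply, RCLike.inner_apply, Fintype.sum_prod_type, x, y, PiLp.toLp_apply]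
    rw [Finset.sum_comm]
    simp [RCLike.star_def, mul_comm]
  have hx : ‖x‖ = Real.sqrt ((Xᴴ * X).trace.re) := by
    rw [EuclideanSpace.norm_eq]
    congr 1
    simp only [Matrix.trace, Matrix.diag, Matrix.mul_apply, conjTranspose_apply,
      Complex.re_sum, Fintype.sum_prod_type, x, PiLp.toLp_apply]
    rw [Finset.sum_comm]
    congr 1; ext i; congr 1; ext j
    rw [RCLike.star_def, ← Complex.normSq_eq_conj_mul_self]
    simp [Complex.ofReal_re, Complex.normSq_eq_norm_sq, ← Complex.ofReal_pow]
  have hy : ‖y‖ = Real.sqrt ((Yᴴ * Y).trace.re) := by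
    rw [EuclideanSpace.norm_eq]
    congr 1
    simp only [Matrix.trace, Matrix.diag, Matrix.mul_apply, conjTranspose_apply,
      Complex.re_sum, Fintype.sum_prod_type, y, PiLp.toLp_apply]
    rw [Finset.sum_comm]
    congr 1; ext i; congr 1; ext j
    rw [RCLike.star_def, ← Complex.normSq_eq_conj_mul_self]
    simp [Complex.ofReal_re, Complex.normSq_eq_norm_sq, ← Complex.ofReal_pow]
  rw [h1, ← hx, ← hy]
  exact norm_inner_le_norm x y

/-- The Bell–Clauser–Horne–Shimony–Holt inequality: if the expectation of the
commutator product `[A,B]·[C,D]` in the state `W` is nonnegative, then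
`|tr(W·K)| ≤ 2` for the CHSH operator `K = A(C+D) + B(C−D)`. -/
theorem bell_chsh_inequality {n : ℕ} (hn : 1 ≤ n)
    (A B C D : Matrix (Fin n) (Fin n) ℂ)
    (hA : A.IsHermitian) (hB : B.IsHermitian)
    (hC : C.IsHermitian) (hD : D.IsHermitian)
    (hA2 : A * A = 1) (hB2 : B * B = 1) (hC2 : C * C = 1) (hD2 : D * D = 1)
    (hAC : A * C = C * A) (hAD : A * D = D * A)
    (hBC : B * C = C * B) (hBD : B * D = D * B)
    (K : Matrix (Fin n) (Fin n) ℂ)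
    (hK : K = A * (C + D) + B * (C - D))
    (W : Matrix (Fin n) (Fin n) ℂ)
    (hW : W.PosSemidef) (htr : W.trace = 1)
    (hpos : 0 ≤ ((W * ((A * B - B * A) * (C * D - D * C))).trace).re) :
    ‖(W * K).trace‖ ≤ 2 := by
  have hAC' : ∀ X, C * (A * X) = A * (C * X) := fun X => by
    rw [← mul_assoc, ← hAC, mul_assoc]
  have hAD' : ∀ X, D * (A * X) = A * (D * X) := fun X => by
    rw [← mul_assoc, ← hAD, mul_assoc]
  have hBC' : ∀ X, C * (B * X) = B * (C * X) := fun X => by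
    rw [← mul_assoc, ← hBC, mul_assoc]
  have hBD' : ∀ X, D * (B * X) = B * (D * X) := fun X => by
    rw [← mul_assoc, ← hBD, mul_assoc]
  have hsA : ∀ X, A * (A * X) = X := fun X => by rw [← mul_assoc, hA2, one_mul]
  have hsB : ∀ X, B * (B * X) = X := fun X => by rw [← mul_assoc, hB2, one_mul]
  have hsC : ∀ X, C * (C * X) = X := fun X => by rw [← mul_assoc, hC2, one_mul]
  have hsD : ∀ X, D * (D * X) = X := fun X => by rw [← mul_assoc, hD2, one_mul]
  have hK2 : K * K = 1 + 1 + 1 + 1 - (A * B - B * A) * (C * D - D * C) := by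
    subst hK
    simp only [mul_add, add_mul, mul_sub, sub_mul, mul_assoc, ← hAC, ← hAD, ← hBC, ← hBD,
      hAC', hAD', hBC', hBD', hsA, hsB, hsC, hsD, hA2, hB2, hC2, hD2, mul_one]
    abel
  have hKh : Kᴴ = K := by
    subst hK
    simp only [conjTranspose_add, conjTranspose_mul, conjTranspose_sub,
      hA.eq, hB.eq, hC.eq, hD.eq]
    simp only [add_mul, sub_mul]
    rw [← hAC, ← hAD, ← hBC, ← hBD, ← mul_add, ← mul_sub]
  obtain ⟨S, hS⟩ : ∃ S : Matrix (Fin n) (Fin n) ℂ, W = Sᴴ * S := by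
    open scoped MatrixOrder in
    exact CStarAlgebra.nonneg_iff_eq_star_mul_self.mp hW.nonneg
  have e0 : (Sᴴᴴ * (K * Sᴴ)).trace = (W * K).trace := by
    rw [conjTranspose_conjTranspose, ← mul_assoc, trace_mul_cycle, ← hS]
  have e1 : (Sᴴᴴ * Sᴴ).trace = 1 := by
    rw [conjTranspose_conjTranspose, trace_mul_comm, ← hS, htr]
  have e2 : ((K * Sᴴ)ᴴ * (K * Sᴴ)).trace = (W * (K * K)).trace := by
    rw [conjTranspose_mul, hKh, conjTranspose_conjTranspose, trace_mul_comm]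
    rw [show K * Sᴴ * (S * K) = K * (W * K) by rw [hS]; noncomm_ring]
    rw [trace_mul_comm, mul_assoc]
  have e3 : (W * (K * K)).trace.re ≤ 4 := by
    rw [hK2, mul_sub, mul_add, mul_add, mul_add, mul_one, trace_sub, trace_add, trace_add,
      trace_add, htr]
    simp only [Complex.sub_re, Complex.add_re, Complex.one_re]
    linarith
  have cs := trace_cs Sᴴ (K * Sᴴ)
  rw [e0, e1, e2] at cs
  have h4 : Real.sqrt ((W * (K * K)).trace.re) ≤ 2 := by
    calc Real.sqrt ((W * (K * K)).trace.re) ≤ Real.sqrt 4 := Real.sqrt_le_sqrt e3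
    _ = 2 := by rw [show (4:ℝ) = 2^2 by norm_num, Real.sqrt_sq (by norm_num)]
  calc ‖(W * K).trace‖ ≤ Real.sqrt (1:ℂ).re * Real.sqrt ((W * (K * K)).trace.re) := cs
  _ ≤ 1 * 2 := by
      apply mul_le_mul _ h4 (Real.sqrt_nonneg _) (by norm_num)
      simp
  _ = 2 := by norm_num
end
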